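/- arXiv:1505.07745 — 2 statements merged into one kernel-verified Lean document; each statement's English description precedes it below -/
import Mathlib

section
/- In Strebel's chimney domain C: if I, J ⊂ ∂C are disjoint arcs of prime ends with mod Γ_{I,J} < ∞, then the moduli mod Γᵋ_{I₋,J₊} and mod Γᵋ_{I₊,J₋} are bounded in ε: there exists M < ∞ with mod Γᵋ_{I₋,J₊} ≤ M and mod Γᵋ_{I₊,J₋} ≤ M for all ε ∈ (0,1]. -/
open MeasureTheory Set
open scoped ENNReal NNReal Topology

noncomputable section

/-- A continuous, piecewise continuously differentiable curve parametrized by `[0,1]`. -/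
structure PCurve where
  toFun : ℝ → ℂ
  continuousOn : ContinuousOn toFun (Set.Icc 0 1)
  exceptional : Finset ℝ
  differentiableAt : ∀ t ∈ Set.Icc (0:ℝ) 1 \ (exceptional : Set ℝ), DifferentiableAt ℝ toFun t
  derivContinuousOn : ContinuousOn (deriv toFun) (Set.Icc (0:ℝ) 1 \ (exceptional : Set ℝ))

/-- The line integral `∫_γ ρ |dz|` of a nonnegative Borel function along a curve. -/
def curveLIntegral (ρ : ℂ → ENNReal) (γ : PCurve) : ENNReal :=
  ∫⁻ t in Set.Ioo (0:ℝ) 1, ρ (γ.toFun t) * ENNReal.ofReal ‖deriv γ.toFun t‖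

/-- `ρ` is admissible for the curve family `Γ`. -/
def IsAdmissible (ρ : ℂ → ENNReal) (Γ : Set PCurve) : Prop :=
  Measurable ρ ∧ ∀ γ ∈ Γ, 1 ≤ curveLIntegral ρ γ

/-- The conformal modulus of a family of curves. -/
def modulus (Γ : Set PCurve) : ENNReal :=
  ⨅ (ρ : ℂ → ENNReal) (_ : IsAdmissible ρ Γ), ∫⁻ z : ℂ, ρ z ^ 2

/-- The family `(E, F; Ω)` of curves with interior in `Ω`, one endpoint in `E` and
the other endpoint in `F`. -/
def connecting (E F Ω : Set ℂ) : Set PCurve :=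
  {γ | (∀ t ∈ Set.Ioo (0:ℝ) 1, γ.toFun t ∈ Ω) ∧
    ((γ.toFun 0 ∈ E ∧ γ.toFun 1 ∈ F) ∨ (γ.toFun 0 ∈ F ∧ γ.toFun 1 ∈ E))}

/-- A continuum: a compact connected set with more than one point. -/
def IsContinuum (E : Set ℂ) : Prop :=
  IsCompact E ∧ IsConnected E ∧ E.Nontrivial

/-- The distance between two sets. -/
def setDist (E F : Set ℂ) : ℝ :=
  sInf (Set.image2 dist E F)

/-- The relative distance `Δ(E,F) = dist(E,F) / min(diam E, diam F)`. -/
def relDist (E F : Set ℂ) : ℝ :=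
  setDist E F / min (Metric.diam E) (Metric.diam F)

/-- Strebel's chimney domain `C = {Im z < 0} ∪ {|Re z| < 1}`. -/
def chimney : Set ℂ := {z | z.im < 0} ∪ {z | |z.re| < 1}

/-- The vertical shrinking map `T_ε(x + iy) = x + iεy`. -/
def Teps (ε : ℝ) (z : ℂ) : ℂ := ⟨z.re, ε * z.im⟩

/-- `Γᵋ_{I,J} = (T_ε(I), T_ε(J); C)`. -/
def chimFam (ε : ℝ) (I J : Set ℂ) : Set PCurve :=
  connecting (Teps ε '' I) (Teps ε '' J) chimney

/-- The right boundary component `C₊ = [1,∞) ∪ {1 + iy : y ≥ 0}` of `∂C`. -/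
def Cplus : Set ℂ := {z | (z.im = 0 ∧ 1 ≤ z.re) ∨ (z.re = 1 ∧ 0 ≤ z.im)}

/-- The left boundary component `C₋ = (-∞,-1] ∪ {-1 + iy : y ≥ 0}` of `∂C`. -/
def Cminus : Set ℂ := {z | (z.im = 0 ∧ z.re ≤ -1) ∨ (z.re = -1 ∧ 0 ≤ z.im)}

/-- `I₀ = {1 + iy : y > 1}`. -/
def chimI0 : Set ℂ := {z | z.re = 1 ∧ 1 < z.im}

/-- `J₀ = (1,2) ⊂ ℝ`. -/
def chimJ0 : Set ℂ := {z | z.im = 0 ∧ 1 < z.re ∧ z.re < 2}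

/-- Arclength parametrization of `C₊`: `t ≤ 0 ↦ 1 - t ∈ [1,∞)`, `t ≥ 0 ↦ 1 + it`. -/
def gPlus (t : ℝ) : ℂ := if t ≤ 0 then ⟨1 - t, 0⟩ else ⟨1, t⟩

/-- Arclength parametrization of `C₋`: `t ≤ 0 ↦ -1 + t ∈ (-∞,-1]`, `t ≥ 0 ↦ -1 + it`. -/
def gMinus (t : ℝ) : ℂ := if t ≤ 0 then ⟨-1 + t, 0⟩ else ⟨-1, t⟩

/-- An arc of prime ends of `∂C`: a connected arc of the prime-end circle of the chimney
domain.  It is either an arc inside one boundary component, or an arc passing through the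
top end of the chimney, or an arc passing through the bottom end (the point at infinity of
the lower half-plane), or an arc passing through both ends. -/
def IsChimneyArc (A : Set ℂ) : Prop :=
  (∃ s : Set ℝ, s.OrdConnected ∧ A = gPlus '' s) ∨
  (∃ s : Set ℝ, s.OrdConnected ∧ A = gMinus '' s) ∨
  (∃ s t : Set ℝ, s.OrdConnected ∧ t.OrdConnected ∧ ¬BddAbove s ∧ ¬BddAbove t ∧
    A = gPlus '' s ∪ gMinus '' t) ∨
  (∃ s t : Set ℝ, s.OrdConnected ∧ t.OrdConnected ∧ ¬BddBelow s ∧ ¬BddBelow t ∧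
    A = gPlus '' s ∪ gMinus '' t) ∨
  (∃ a b a' b' : ℝ,
    A = gPlus '' (Set.Iio a ∪ Set.Ioi b) ∪ gMinus '' (Set.Iio a' ∪ Set.Ioi b'))

/-- `A` contains the top end of the chimney:
`{1 + iy : y > a} ∪ {-1 + iy : y > a} ⊆ A` for some `a > 0`. -/
def ContainsTopEnd (A : Set ℂ) : Prop :=
  ∃ a : ℝ, 0 < a ∧
    {z : ℂ | z.re = 1 ∧ a < z.im} ∪ {z : ℂ | z.re = -1 ∧ a < z.im} ⊆ A

/-- `A` contains a two-sided neighborhood of the corner `1`: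
`{1 + iy : 0 < y < δ} ∪ (1, 1 + δ) ⊆ A` for some `δ > 0`. -/
def CornerNbhdPlus (A : Set ℂ) : Prop :=
  ∃ δ : ℝ, 0 < δ ∧
    ({z : ℂ | z.re = 1 ∧ 0 < z.im ∧ z.im < δ} ∪
      {z : ℂ | z.im = 0 ∧ 1 < z.re ∧ z.re < 1 + δ}) ⊆ A

/-- `A` contains a two-sided neighborhood of the corner `-1`:
`(-1 - δ, -1) ∪ {-1 + iy : 0 < y < δ} ⊆ A` for some `δ > 0`. -/
def CornerNbhdMinus (A : Set ℂ) : Prop :=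
  ∃ δ : ℝ, 0 < δ ∧
    ({z : ℂ | z.im = 0 ∧ -1 - δ < z.re ∧ z.re < -1} ∪
      {z : ℂ | z.re = -1 ∧ 0 < z.im ∧ z.im < δ}) ⊆ A

lemma pcurve_length (γ : PCurve) {p q : ℝ} (hp : 0 ≤ p) (hq : q ≤ 1) (hpq : p ≤ q) :
    ENNReal.ofReal (‖(γ.toFun q - γ.toFun p)‖) ≤
      ∫⁻ t in Set.Ioo p q, ENNReal.ofReal ‖deriv γ.toFun t‖ := by
  by_cases htop : (∫⁻ t in Set.Ioo p q, ENNReal.ofReal ‖deriv γ.toFun t‖) = ⊤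
  · rw [htop]; exact le_top
  have hmeas : Measurable (deriv γ.toFun) := measurable_deriv _
  have hint : IntegrableOn (deriv γ.toFun) (Set.Ioo p q) := by
    refine ⟨hmeas.aestronglyMeasurable, ?_⟩
    simp only [HasFiniteIntegral, ← ofReal_norm_eq_enorm]
    exact Ne.lt_top htop
  have hIcc : Set.Icc p q ⊆ Set.Icc (0:ℝ) 1 := Icc_subset_Icc hp hq
  have hFTC : ∫ x in p..q, deriv γ.toFun x = γ.toFun q - γ.toFun p := by
    refine integral_eq_of_hasDerivAt_off_countable_of_le γ.toFun (deriv γ.toFun) hpq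
      ((γ.exceptional : Set ℝ).to_countable) (γ.continuousOn.mono hIcc) ?_ ?_
    · intro x hx
      exact (γ.differentiableAt x ⟨hIcc (Ioo_subset_Icc_self hx.1), hx.2⟩).hasDerivAt
    · rw [intervalIntegrable_iff_integrableOn_Ioc_of_le hpq,
        integrableOn_Ioc_iff_integrableOn_Ioo]
      exact hint
  calc ENNReal.ofReal (‖(γ.toFun q - γ.toFun p)‖)
      = ENNReal.ofReal ‖∫ x in p..q, deriv γ.toFun x‖ := by
        rw [hFTC]
    _ ≤ ENNReal.ofReal (∫ x in p..q, ‖deriv γ.toFun x‖) :=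
        ENNReal.ofReal_le_ofReal (intervalIntegral.norm_integral_le_integral_norm hpq)
    _ = ENNReal.ofReal (∫ x in Set.Ioo p q, ‖deriv γ.toFun x‖) := by
        rw [intervalIntegral.integral_of_le hpq, integral_Ioc_eq_integral_Ioo]
    _ ≤ ∫⁻ t in Set.Ioo p q, ENNReal.ofReal ‖deriv γ.toFun t‖ := by
        rw [ofReal_integral_eq_lintegral_ofReal hint.norm
          (Filter.Eventually.of_forall fun x => norm_nonneg _)]

def ballRho (R : ℝ) : ℂ → ℝ≥0∞ := (Metric.closedBall (0:ℂ) R).indicator fun _ => 2⁻¹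

lemma ballRho_measurable (R : ℝ) : Measurable (ballRho R) :=
  measurable_const.indicator measurableSet_closedBall

lemma ballRho_energy (R : ℝ) : ∫⁻ z : ℂ, (ballRho R) z ^ 2 ≠ ⊤ := by
  have h : ∀ z : ℂ, (ballRho R) z ^ 2
      = (Metric.closedBall (0:ℂ) R).indicator (fun _ => ((2:ℝ≥0∞)⁻¹)^2) z := by
    intro z
    by_cases hz : z ∈ Metric.closedBall (0:ℂ) R <;>
      simp [ballRho, Set.indicator_apply, hz]
  rw [lintegral_congr h, lintegral_indicator_const measurableSet_closedBall]
  exact ENNReal.mul_ne_top (by norm_num) (measure_closedBall_lt_top).ne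

lemma admissible_ball_curve {R : ℝ} (γ : PCurve) {p q : ℝ}
    (hp : 0 ≤ p) (hq : q ≤ 1) (hpq : p ≤ q)
    (hball : ∀ t ∈ Set.Icc p q, ‖(γ.toFun t)‖ ≤ R)
    (hgap : 2 ≤ ‖(γ.toFun q - γ.toFun p)‖) :
    1 ≤ curveLIntegral (ballRho R) γ := by
  have hd : Measurable fun t => ENNReal.ofReal ‖deriv γ.toFun t‖ :=
    (measurable_deriv _).norm.ennreal_ofReal
  have key : ∫⁻ t in Set.Ioo p q, (ballRho R) (γ.toFun t) * ENNReal.ofReal ‖deriv γ.toFun t‖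
      = 2⁻¹ * ∫⁻ t in Set.Ioo p q, ENNReal.ofReal ‖deriv γ.toFun t‖ := by
    rw [← lintegral_const_mul _ hd]
    refine setLIntegral_congr_fun measurableSet_Ioo ?_
    intro t ht
    have : γ.toFun t ∈ Metric.closedBall (0:ℂ) R := by
      rw [Metric.mem_closedBall, Complex.dist_eq, sub_zero]
      exact hball t (Ioo_subset_Icc_self ht)
    simp [ballRho, Set.indicator_of_mem this]
  calc (1:ℝ≥0∞) = 2⁻¹ * ENNReal.ofReal 2 := by
        rw [ENNReal.ofReal_ofNat, ENNReal.inv_mul_cancel] <;> norm_num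
    _ ≤ 2⁻¹ * ENNReal.ofReal (‖(γ.toFun q - γ.toFun p)‖) := by
        exact mul_le_mul_right (ENNReal.ofReal_le_ofReal hgap) _
    _ ≤ 2⁻¹ * ∫⁻ t in Set.Ioo p q, ENNReal.ofReal ‖deriv γ.toFun t‖ := by
        exact mul_le_mul_right (pcurve_length γ hp hq hpq) _
    _ = ∫⁻ t in Set.Ioo p q, (ballRho R) (γ.toFun t) * ENNReal.ofReal ‖deriv γ.toFun t‖ :=
        key.symm
    _ ≤ curveLIntegral (ballRho R) γ :=
        lintegral_mono_set (Set.Ioo_subset_Ioo hp hq)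

lemma mem_chimney_iff {z : ℂ} : z ∈ chimney ↔ z.im < 0 ∨ |z.re| < 1 := Iff.rfl

lemma abs_le_one_of_im_zero {z : ℂ} (him : z.im = 0) (hre : |z.re| ≤ 1) :
    ‖z‖ ≤ 1 := by
  have : z = ((z.re : ℝ) : ℂ) := by
    apply Complex.ext <;> simp [him]
  rw [this, Complex.norm_real, Real.norm_eq_abs]
  exact hre

lemma exit0 {f : ℝ → ℂ} (hc : ContinuousOn f (Icc 0 1)) {R : ℝ}
    {u v : ℝ} (hu : u ∈ Icc (0:ℝ) 1) (hv : v ∈ Icc (0:ℝ) 1) (huv : u < v)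
    (hfu : ‖(f u)‖ ≤ R) (hfv : R + 2 ≤ ‖(f v)‖) :
    ∃ p q : ℝ, 0 ≤ p ∧ p ≤ q ∧ q ≤ 1 ∧ (∀ t ∈ Icc p q, ‖(f t)‖ ≤ R + 2) ∧
      2 ≤ ‖(f q - f p)‖ := by
  have habs : ContinuousOn (fun t => ‖(f t)‖) (Icc u v) :=
    continuous_norm.comp_continuousOn (hc.mono (Icc_subset_Icc hu.1 hv.2))
  set S : Set ℝ := Icc u v ∩ (fun t => ‖(f t)‖) ⁻¹' (Ici (R + 2)) with hS
  have hSclosed : IsClosed S := habs.preimage_isClosed_of_isClosed isClosed_Icc isClosed_Ici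
  have hSne : S.Nonempty := ⟨v, ⟨le_of_lt huv, le_rfl⟩, hfv⟩
  have hSbdd : BddBelow S := ⟨u, fun t ht => ht.1.1⟩
  set q := sInf S with hq
  have hqS : q ∈ S := hSclosed.csInf_mem hSne hSbdd
  have hule : u ≤ q := le_csInf hSne fun t ht => ht.1.1
  have huq : u < q := by
    rcases lt_or_eq_of_le hule with h | h
    · exact h
    · exfalso
      have h2 : R + 2 ≤ ‖(f q)‖ := hqS.2
      rw [← h] at h2
      linarith
  have hqlt : ∀ t ∈ Ico u q, ‖(f t)‖ < R + 2 := by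
    intro t ht
    by_contra hcon
    push_neg at hcon
    have : t ∈ S := ⟨⟨ht.1, le_trans ht.2.le hqS.1.2⟩, hcon⟩
    exact absurd (csInf_le hSbdd this) (not_le.mpr ht.2)
  -- now p
  set S' : Set ℝ := Icc u q ∩ (fun t => ‖(f t)‖) ⁻¹' (Iic R) with hS'
  have hS'closed : IsClosed S' :=
    (habs.mono (Icc_subset_Icc le_rfl hqS.1.2)).preimage_isClosed_of_isClosed isClosed_Icc isClosed_Iic
  have hS'ne : S'.Nonempty := ⟨u, ⟨le_rfl, huq.le⟩, hfu⟩
  have hS'bdd : BddAbove S' := ⟨q, fun t ht => ht.1.2⟩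
  set p := sSup S' with hp
  have hpS' : p ∈ S' := hS'closed.csSup_mem hS'ne hS'bdd
  have hup : u ≤ p := le_csSup hS'bdd ⟨⟨le_rfl, huq.le⟩, hfu⟩
  have hpq : p ≤ q := hpS'.1.2
  -- abs f q ≤ R + 2 by left limit
  have hfq_le : ‖(f q)‖ ≤ R + 2 := by
    have hcw : ContinuousWithinAt (fun t => ‖(f t)‖) (Ico u q) q :=
      (habs q ⟨hule, hqS.1.2⟩).mono
        (Ico_subset_Icc_self.trans (Icc_subset_Icc le_rfl hqS.1.2))
    have hne : (𝓝[Ico u q] q).NeBot := by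
      rw [← mem_closure_iff_nhdsWithin_neBot, closure_Ico huq.ne]
      exact ⟨huq.le, le_rfl⟩
    exact le_of_tendsto hcw (Filter.eventually_of_mem self_mem_nhdsWithin
      fun t ht => (hqlt t ht).le)
  refine ⟨p, q, le_trans hu.1 hup, hpq, le_trans hqS.1.2 hv.2, ?_, ?_⟩
  · intro t ht
    rcases eq_or_lt_of_le ht.2 with h | h
    · rw [h]; exact hfq_le
    · exact (hqlt t ⟨le_trans hup ht.1, h⟩).le
  · have h1 : R + 2 ≤ ‖(f q)‖ := hqS.2
    have h2 : ‖(f p)‖ ≤ R := hpS'.2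
    have h3 := abs_norm_sub_norm_le (f q) (f p)
    have := abs_le.mp h3
    linarith [this.1, this.2, abs_nonneg (‖(f q)‖ - ‖(f p)‖)]

lemma exit_lemma {f : ℝ → ℂ} (hc : ContinuousOn f (Icc 0 1)) {R : ℝ}
    {u v : ℝ} (hu : u ∈ Icc (0:ℝ) 1) (hv : v ∈ Icc (0:ℝ) 1)
    (hfu : ‖(f u)‖ ≤ R) (hfv : R + 2 ≤ ‖(f v)‖) :
    ∃ p q : ℝ, 0 ≤ p ∧ p ≤ q ∧ q ≤ 1 ∧ (∀ t ∈ Icc p q, ‖(f t)‖ ≤ R + 2) ∧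
      2 ≤ ‖(f q - f p)‖ := by
  rcases lt_trichotomy u v with h | h | h
  · exact exit0 hc hu hv h hfu hfv
  · exfalso; rw [h] at hfu; linarith
  · -- apply to reflected function
    have hrefl : ∀ t : ℝ, t ∈ Icc (0:ℝ) 1 → 1 - t ∈ Icc (0:ℝ) 1 := by
      intro t ht; constructor
      · linarith [ht.2]
      · linarith [ht.1]
    have hcg : ContinuousOn (fun t => f (1 - t)) (Icc 0 1) :=
      hc.comp ((continuous_const.sub continuous_id).continuousOn) hrefl
    have hgu : ‖((fun t => f (1 - t)) (1 - u))‖ ≤ R := by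
      simpa using hfu
    have hgv : R + 2 ≤ ‖((fun t => f (1 - t)) (1 - v))‖ := by
      simpa using hfv
    obtain ⟨p, q, hp0, hpq, hq1, hbd, hgap⟩ :=
      exit0 hcg (hrefl u hu) (hrefl v hv) (by linarith) hgu hgv
    refine ⟨1 - q, 1 - p, by linarith, by linarith, by linarith, ?_, ?_⟩
    · intro t ht
      have h1t : 1 - t ∈ Icc p q := ⟨by linarith [ht.2], by linarith [ht.1]⟩
      have := hbd (1 - t) h1t
      simpa using this
    · have : f (1 - p) - f (1 - q) = -((fun t => f (1 - t)) q - (fun t => f (1 - t)) p) := by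
        simp only [neg_sub]
      rw [this, norm_neg]
      exact hgap

lemma cross0 {f : ℝ → ℂ} (hc : ContinuousOn f (Icc 0 1))
    (hmem : ∀ t ∈ Ioo (0:ℝ) 1, f t ∈ chimney)
    {t₀ t₁ : ℝ} (ht₀ : t₀ ∈ Icc (0:ℝ) 1) (ht₁ : t₁ ∈ Ioo (0:ℝ) 1) (hlt : t₀ < t₁)
    (h0im : (f t₀).im ≤ 0) (h0re : 1 < |(f t₀).re|) (h1im : 0 < (f t₁).im) :
    ∃ t ∈ Icc (0:ℝ) 1, ‖(f t)‖ ≤ 1 := by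
  have hsub : Icc t₀ t₁ ⊆ Icc (0:ℝ) 1 := Icc_subset_Icc ht₀.1 ht₁.2.le
  have him : ContinuousOn (fun t => (f t).im) (Icc t₀ t₁) :=
    Complex.continuous_im.comp_continuousOn (hc.mono hsub)
  set S : Set ℝ := Icc t₀ t₁ ∩ (fun t => (f t).im) ⁻¹' (Iic 0) with hSdef
  have hSclosed : IsClosed S := him.preimage_isClosed_of_isClosed isClosed_Icc isClosed_Iic
  have hSne : S.Nonempty := ⟨t₀, ⟨le_rfl, hlt.le⟩, h0im⟩
  have hSbdd : BddAbove S := ⟨t₁, fun t ht => ht.1.2⟩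
  set T := sSup S with hT
  have hTS : T ∈ S := hSclosed.csSup_mem hSne hSbdd
  have hT0 : t₀ ≤ T := le_csSup hSbdd ⟨⟨le_rfl, hlt.le⟩, h0im⟩
  have hTlt : T < t₁ := by
    rcases lt_or_eq_of_le hTS.1.2 with h | h
    · exact h
    · exfalso
      have := hTS.2
      rw [h] at this
      simp only [mem_preimage, mem_Iic] at this
      linarith
  have hpos : ∀ τ ∈ Ioc T t₁, 0 < (f τ).im := by
    intro τ hτ
    by_contra hcon
    push_neg at hcon
    have : τ ∈ S := ⟨⟨le_trans hT0 hτ.1.le, hτ.2⟩, hcon⟩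
    exact absurd (le_csSup hSbdd this) (not_le.mpr hτ.1)
  have hTim_ge : 0 ≤ (f T).im := by
    have hcw : ContinuousWithinAt (fun t => (f t).im) (Ioc T t₁) T :=
      (him T hTS.1).mono (Ioc_subset_Icc_self.trans (Icc_subset_Icc hT0 le_rfl))
    have hne : (𝓝[Ioc T t₁] T).NeBot := by
      rw [← mem_closure_iff_nhdsWithin_neBot, closure_Ioc hTlt.ne]
      exact ⟨le_rfl, hTlt.le⟩
    exact ge_of_tendsto hcw (Filter.eventually_of_mem self_mem_nhdsWithin
      fun τ hτ => (hpos τ hτ).le)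
  have hTim : (f T).im = 0 := le_antisymm hTS.2 hTim_ge
  -- T cannot be 0
  have hTne0 : 0 < T := by
    rcases lt_or_eq_of_le (le_trans ht₀.1 hT0) with h | h
    · exact h
    · exfalso
      -- T = 0, hence t₀ = 0 and the curve has |re| < 1 just right of 0
      have ht₀0 : t₀ = 0 := le_antisymm (h ▸ hT0 : t₀ ≤ 0) ht₀.1
      have hrelt : ∀ τ ∈ Ioc T t₁, |(f τ).re| < 1 := by
        intro τ hτ
        have hτmem : τ ∈ Ioo (0:ℝ) 1 := ⟨h ▸ hτ.1, lt_of_le_of_lt hτ.2 ht₁.2⟩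
        rcases hmem τ hτmem with hlt' | hlt'
        · exact absurd hlt' (not_lt.mpr (hpos τ hτ).le)
        · exact hlt'
      have hcw : ContinuousWithinAt (fun t => |(f t).re|) (Ioc T t₁) T :=
        ((continuous_abs.comp Complex.continuous_re).comp_continuousOn
          (hc.mono hsub) T hTS.1).mono
          (Ioc_subset_Icc_self.trans (Icc_subset_Icc hT0 le_rfl))
      have hne : (𝓝[Ioc T t₁] T).NeBot := by
        rw [← mem_closure_iff_nhdsWithin_neBot, closure_Ioc hTlt.ne]
        exact ⟨le_rfl, hTlt.le⟩
      have : |(f T).re| ≤ 1 := le_of_tendsto hcw (Filter.eventually_of_mem self_mem_nhdsWithin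
        fun τ hτ => (hrelt τ hτ).le)
      rw [← h, ← ht₀0] at this
      linarith
  -- T interior, im = 0, so |re| < 1
  have hTmem : f T ∈ chimney := hmem T ⟨hTne0, hTlt.trans ht₁.2⟩
  have hre : |(f T).re| < 1 := by
    rcases hTmem with h | h
    · simp only [mem_setOf_eq, hTim] at h
      exact absurd h (lt_irrefl 0)
    · exact h
  exact ⟨T, hsub hTS.1, abs_le_one_of_im_zero hTim hre.le⟩

lemma cross_lemma {f : ℝ → ℂ} (hc : ContinuousOn f (Icc 0 1))
    (hmem : ∀ t ∈ Ioo (0:ℝ) 1, f t ∈ chimney)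
    {t₀ t₁ : ℝ} (ht₀ : t₀ ∈ Icc (0:ℝ) 1) (ht₁ : t₁ ∈ Ioo (0:ℝ) 1)
    (h0im : (f t₀).im ≤ 0) (h0re : 1 < |(f t₀).re|) (h1im : 0 < (f t₁).im) :
    ∃ t ∈ Icc (0:ℝ) 1, ‖(f t)‖ ≤ 1 := by
  rcases lt_trichotomy t₀ t₁ with h | h | h
  · exact cross0 hc hmem ht₀ ht₁ h h0im h0re h1im
  · exfalso; rw [h] at h0im; linarith
  · have hrefl : ∀ t : ℝ, t ∈ Icc (0:ℝ) 1 → 1 - t ∈ Icc (0:ℝ) 1 := by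
      intro t ht; constructor
      · linarith [ht.2]
      · linarith [ht.1]
    have hcg : ContinuousOn (fun t => f (1 - t)) (Icc 0 1) :=
      hc.comp ((continuous_const.sub continuous_id).continuousOn) hrefl
    have hmemg : ∀ t ∈ Ioo (0:ℝ) 1, (fun t => f (1 - t)) t ∈ chimney := by
      intro t ht
      exact hmem (1 - t) ⟨by linarith [ht.2], by linarith [ht.1]⟩
    obtain ⟨t, htmem, habs⟩ := cross0 hcg hmemg (hrefl t₀ ht₀)
      (⟨by linarith [ht₁.2], by linarith [ht₁.1]⟩ : 1 - t₁ ∈ Ioo (0:ℝ) 1)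
      (by linarith) (by simpa using h0im) (by simpa using h0re) (by simpa using h1im)
    exact ⟨1 - t, hrefl t htmem, by simpa using habs⟩

lemma setLIntegral_affine {f : ℝ → ℝ≥0∞} (hf : Measurable f) {a : ℝ} (ha : a ≠ 0) (b : ℝ)
    {s : Set ℝ} (hs : MeasurableSet s) :
    ∫⁻ x in s, f x = ENNReal.ofReal |a| * ∫⁻ t in (fun t => a*t+b) ⁻¹' s, f (a*t+b) := by
  have hmble : Measurable (fun t : ℝ => a*t+b) := (measurable_id.const_mul a).add_const b
  have hmap : Measure.map (fun t : ℝ => a*t+b) volume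
      = (ENNReal.ofReal |a⁻¹|) • volume := by
    have h1 : (fun t : ℝ => a*t+b) = (fun x : ℝ => x + b) ∘ (fun t : ℝ => a*t) := rfl
    rw [h1, ← Measure.map_map (measurable_add_const b) (measurable_const_mul a),
      Real.map_volume_mul_left ha, Measure.map_smul, map_add_right_eq_self]
  have h2 : ∫⁻ x in s, f x ∂(Measure.map (fun t : ℝ => a*t+b) volume)
      = ∫⁻ t in (fun t => a*t+b) ⁻¹' s, f (a*t+b) := setLIntegral_map hs hf hmble
  rw [hmap] at h2
  rw [Measure.restrict_smul, lintegral_smul_measure] at h2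
  rw [← h2, smul_eq_mul, ← mul_assoc, ← ENNReal.ofReal_mul (abs_nonneg a)]
  rw [← abs_mul, mul_inv_cancel₀ ha]
  simp

lemma lintegral_sq_lower {f : ℝ → ℝ≥0∞} (hf : Measurable f) {r : ℝ} (hr : 0 < r)
    (h : (ENNReal.ofReal r)⁻¹ ≤ ∫⁻ t in Ioo (0:ℝ) 1, f t) :
    ENNReal.ofReal (1/(4*r^2)) ≤ ∫⁻ t in Ioo (0:ℝ) 1, f t ^ 2 := by
  by_contra hcon
  push_neg at hcon
  have hpt : ∀ x : ℝ≥0∞, x ≤ ENNReal.ofReal (2*r) * x^2 + ENNReal.ofReal (1/(8*r)) := by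
    intro x
    rcases eq_or_ne x ⊤ with rfl | hx
    · have h2r : ENNReal.ofReal (2*r) ≠ 0 := by
        simp only [ne_eq, ENNReal.ofReal_eq_zero, not_le]; linarith
      rw [ENNReal.top_pow (by norm_num), ENNReal.mul_top h2r]
      exact le_top
    · set a := x.toReal with ha'
      have hxa : x = ENNReal.ofReal a := (ENNReal.ofReal_toReal hx).symm
      have ha : 0 ≤ a := ENNReal.toReal_nonneg
      have hreal : a ≤ 2*r*a^2 + 1/(8*r) := by
        have key : 2*r*a^2 + 1/(8*r) - a = (4*r*a - 1)^2 / (8*r) := by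
          field_simp
          ring
        have pos : (0:ℝ) ≤ (4*r*a - 1)^2 / (8*r) :=
          div_nonneg (sq_nonneg _) (by positivity)
        linarith [key ▸ pos]
      calc x = ENNReal.ofReal a := hxa
        _ ≤ ENNReal.ofReal (2*r*a^2 + 1/(8*r)) := ENNReal.ofReal_le_ofReal hreal
        _ = ENNReal.ofReal (2*r*a^2) + ENNReal.ofReal (1/(8*r)) :=
            ENNReal.ofReal_add (by positivity) (by positivity)
        _ = ENNReal.ofReal (2*r) * x^2 + ENNReal.ofReal (1/(8*r)) := by
            rw [ENNReal.ofReal_mul (by positivity), hxa, ← ENNReal.ofReal_pow ha]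
  have hint : ∫⁻ t in Ioo (0:ℝ) 1, f t
      ≤ ENNReal.ofReal (2*r) * (∫⁻ t in Ioo (0:ℝ) 1, f t^2) + ENNReal.ofReal (1/(8*r)) := by
    calc ∫⁻ t in Ioo (0:ℝ) 1, f t
        ≤ ∫⁻ t in Ioo (0:ℝ) 1, (ENNReal.ofReal (2*r) * f t^2 + ENNReal.ofReal (1/(8*r))) :=
          lintegral_mono fun t => hpt (f t)
      _ = (∫⁻ t in Ioo (0:ℝ) 1, ENNReal.ofReal (2*r) * f t^2) + ENNReal.ofReal (1/(8*r)) := by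
          rw [lintegral_add_right _ measurable_const, setLIntegral_const]
          rw [Real.volume_Ioo]
          norm_num
      _ = ENNReal.ofReal (2*r) * (∫⁻ t in Ioo (0:ℝ) 1, f t^2) + ENNReal.ofReal (1/(8*r)) := by
          rw [lintegral_const_mul _ (hf.pow_const 2)]
  have hlt : (ENNReal.ofReal r)⁻¹
      < ENNReal.ofReal (2*r) * ENNReal.ofReal (1/(4*r^2)) + ENNReal.ofReal (1/(8*r)) := by
    refine lt_of_le_of_lt (le_trans h hint) ?_
    refine ENNReal.add_lt_add_right ENNReal.ofReal_ne_top ?_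
    refine ENNReal.mul_lt_mul_right (by simp only [ne_eq, ENNReal.ofReal_eq_zero, not_le]; linarith)
      ENNReal.ofReal_ne_top ?_
    exact hcon
  rw [← ENNReal.ofReal_inv_of_pos hr, ← ENNReal.ofReal_mul (by positivity),
    ← ENNReal.ofReal_add (by positivity) (by positivity)] at hlt
  rw [ENNReal.ofReal_lt_ofReal_iff_of_nonneg (by positivity)] at hlt
  have : 2*r*(1/(4*r^2)) + 1/(8*r) = 5/(8*r) := by field_simp; ring
  rw [this] at hlt
  rw [inv_eq_one_div] at hlt
  rw [div_lt_div_iff₀ hr (by positivity)] at hlt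
  nlinarith

lemma complex_mk_eq (x y : ℝ) : (⟨x, y⟩ : ℂ) = (x : ℂ) + (y : ℂ) * Complex.I :=
  Complex.mk_eq_add_mul_I x y

lemma horiz_hasDerivAt (y t : ℝ) :
    HasDerivAt (fun t : ℝ => ((2*t - 1 : ℝ) : ℂ) + (y:ℂ)*Complex.I) 2 t := by
  have h1 : HasDerivAt (fun t : ℝ => 2*t - 1) 2 t := by
    simpa using ((hasDerivAt_id t).const_mul (2:ℝ)).sub_const 1
  have h2 := h1.ofReal_comp
  simpa using h2.add_const ((y:ℂ)*Complex.I)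

def horizSeg (y : ℝ) : PCurve where
  toFun := fun t => ((2*t - 1 : ℝ) : ℂ) + (y:ℂ)*Complex.I
  continuousOn := fun t _ => ((horiz_hasDerivAt y t).continuousAt).continuousWithinAt
  exceptional := ∅
  differentiableAt := fun t _ => (horiz_hasDerivAt y t).differentiableAt
  derivContinuousOn := by
    have h : ∀ t : ℝ, deriv (fun t : ℝ => ((2*t - 1 : ℝ) : ℂ) + (y:ℂ)*Complex.I) t = 2 :=
      fun t => (horiz_hasDerivAt y t).deriv
    exact (continuousOn_const (c := (2:ℂ))).congr fun t _ => h t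

lemma horizSeg_apply (y t : ℝ) : (horizSeg y).toFun t = (⟨2*t - 1, y⟩ : ℂ) := by
  rw [complex_mk_eq]; rfl

lemma horizSeg_deriv (y t : ℝ) : deriv (horizSeg y).toFun t = 2 :=
  (horiz_hasDerivAt y t).deriv

lemma measurable_mk_comp {ρ : ℂ → ℝ≥0∞} (hmeas : Measurable ρ) :
    Measurable fun p : ℝ × ℝ => ρ (⟨p.1, p.2⟩ : ℂ) := by
  have h1 : Measurable fun p : ℝ × ℝ => (⟨p.1, p.2⟩ : ℂ) :=
    Complex.measurableEquivRealProd.symm.measurable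
  exact hmeas.comp h1

lemma modulus_top_of_horiz {I J : Set ℂ} {y₀ : ℝ}
    (hI : ∀ y, y₀ ≤ y → (⟨-1, y⟩ : ℂ) ∈ I) (hJ : ∀ y, y₀ ≤ y → (⟨1, y⟩ : ℂ) ∈ J) :
    modulus (connecting I J chimney) = ⊤ := by
  rw [modulus, iInf_eq_top]
  intro ρ
  rw [iInf_eq_top]
  intro hadm
  obtain ⟨hmeas, hadmis⟩ := hadm
  have hrow : ∀ y : ℝ, y₀ ≤ y →
      ENNReal.ofReal (1/8) ≤ ∫⁻ x in Ioo (-1:ℝ) 1, ρ (⟨x, y⟩ : ℂ)^2 := by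
    intro y hy
    have hmemb : horizSeg y ∈ connecting I J chimney := by
      refine ⟨fun t ht => ?_, Or.inl ⟨?_, ?_⟩⟩
      · rw [horizSeg_apply]
        right
        simp only [mem_setOf_eq]
        rw [abs_lt]
        constructor <;> [linarith [ht.1]; linarith [ht.2]]
      · have : (horizSeg y).toFun 0 = (⟨-1, y⟩ : ℂ) := by
          rw [horizSeg_apply]; norm_num
        rw [this]; exact hI y hy
      · have : (horizSeg y).toFun 1 = (⟨1, y⟩ : ℂ) := by
          rw [horizSeg_apply]; norm_num
        rw [this]; exact hJ y hy
    have h1 := hadmis _ hmemb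
    have hmg : Measurable fun t : ℝ => ρ ((horizSeg y).toFun t) := by
      apply hmeas.comp
      exact continuousOn_univ.mp
        (fun t _ => ((horiz_hasDerivAt y t).continuousAt).continuousWithinAt) |>.measurable
    have h2 : (ENNReal.ofReal 2)⁻¹ ≤ ∫⁻ t in Ioo (0:ℝ) 1, ρ ((horizSeg y).toFun t) := by
      have hrw : curveLIntegral ρ (horizSeg y)
          = (∫⁻ t in Ioo (0:ℝ) 1, ρ ((horizSeg y).toFun t)) * 2 := by
        rw [curveLIntegral, ← lintegral_mul_const'' _ hmg.aemeasurable]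
        refine setLIntegral_congr_fun measurableSet_Ioo ?_
        intro t _
        beta_reduce; rw [horizSeg_deriv]
        norm_num
      rw [hrw] at h1
      rw [ENNReal.ofReal_ofNat]
      calc (2:ℝ≥0∞)⁻¹ = 1 * 2⁻¹ := (one_mul _).symm
        _ ≤ ((∫⁻ t in Ioo (0:ℝ) 1, ρ ((horizSeg y).toFun t)) * 2) * 2⁻¹ :=
            mul_le_mul_left h1 _
        _ = (∫⁻ t in Ioo (0:ℝ) 1, ρ ((horizSeg y).toFun t)) * (2 * 2⁻¹) := by
            rw [mul_assoc]
        _ = ∫⁻ t in Ioo (0:ℝ) 1, ρ ((horizSeg y).toFun t) := by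
            rw [ENNReal.mul_inv_cancel (by norm_num) (by norm_num), mul_one]
    have h3 := lintegral_sq_lower hmg (by norm_num : (0:ℝ) < 2) h2
    -- change of variables x = 2 t - 1
    have hfx : Measurable fun x : ℝ => ρ (⟨x, y⟩ : ℂ)^2 := by
      have := measurable_mk_comp hmeas
      exact ((this.comp (measurable_id.prodMk measurable_const)).pow_const 2 :)
    have hpre : (fun t : ℝ => 2*t + (-1)) ⁻¹' (Ioo (-1:ℝ) 1) = Ioo (0:ℝ) 1 := by
      ext t
      simp only [mem_preimage, mem_Ioo]
      constructor <;> intro ht <;> constructor <;> linarith [ht.1, ht.2]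
    have hcv := setLIntegral_affine hfx (by norm_num : (2:ℝ) ≠ 0) (-1) measurableSet_Ioo
      (s := Ioo (-1:ℝ) 1)
    rw [hpre] at hcv
    have heq : ∀ t : ℝ, ρ (⟨2*t + (-1), y⟩ : ℂ)^2 = ρ ((horizSeg y).toFun t)^2 := by
      intro t
      rw [horizSeg_apply]
      ring_nf
    rw [lintegral_congr heq] at hcv
    calc ENNReal.ofReal (1/8) = ENNReal.ofReal 2 * ENNReal.ofReal (1/(4*2^2)) := by
          rw [← ENNReal.ofReal_mul (by norm_num)]
          norm_num
      _ ≤ ENNReal.ofReal 2 * ∫⁻ t in Ioo (0:ℝ) 1, ρ ((horizSeg y).toFun t)^2 :=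
          mul_le_mul_right h3 _
      _ = ∫⁻ x in Ioo (-1:ℝ) 1, ρ (⟨x, y⟩ : ℂ)^2 := by
          rw [hcv]
          norm_num
  -- Fubini
  have hF : Measurable fun p : ℝ × ℝ => ρ (⟨p.1, p.2⟩ : ℂ)^2 :=
    (measurable_mk_comp hmeas).pow_const 2
  have h0 : ∫⁻ z : ℂ, ρ z ^ 2 = ∫⁻ p : ℝ × ℝ, ρ (⟨p.1, p.2⟩ : ℂ)^2 := by
    rw [← (Complex.volume_preserving_equiv_real_prod.symm _).lintegral_comp
      (hmeas.pow_const 2)]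
    rfl
  rw [eq_top_iff, h0]
  calc (⊤:ℝ≥0∞) = ENNReal.ofReal (1/8) * volume (Ici y₀) := by
        rw [Real.volume_Ici, ENNReal.mul_top (by norm_num)]
    _ = ∫⁻ y in Ici y₀, ENNReal.ofReal (1/8) := by
        rw [setLIntegral_const, mul_comm]
    _ ≤ ∫⁻ y in Ici y₀, ∫⁻ x in Ioo (-1:ℝ) 1, ρ (⟨x, y⟩ : ℂ)^2 :=
        setLIntegral_mono' measurableSet_Ici fun y hy => hrow y hy
    _ = ∫⁻ p in (Ioo (-1:ℝ) 1) ×ˢ (Ici y₀), ρ (⟨p.1, p.2⟩ : ℂ)^2 := by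
        rw [Measure.volume_eq_prod, ← Measure.prod_restrict,
          lintegral_prod_symm _ hF.aemeasurable]
    _ ≤ ∫⁻ p : ℝ × ℝ, ρ (⟨p.1, p.2⟩ : ℂ)^2 := setLIntegral_le_lintegral _ _

open Real in
lemma lintegral_polar_le (F : ℝ × ℝ → ℝ≥0∞) {s : Set (ℝ × ℝ)}
    (hs : MeasurableSet s) (hsub : s ⊆ polarCoord.target) :
    ∫⁻ p in s, ENNReal.ofReal p.1 * F (polarCoord.symm p) ≤ ∫⁻ p : ℝ × ℝ, F p := by
  set B : ℝ × ℝ → ℝ × ℝ →L[ℝ] ℝ × ℝ := fun p =>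
    LinearMap.toContinuousLinearMap (Matrix.toLin (Module.Basis.finTwoProd ℝ) (Module.Basis.finTwoProd ℝ)
      !![Real.cos p.2, -p.1 * Real.sin p.2; Real.sin p.2, p.1 * Real.cos p.2]) with hB
  have A : ∀ p ∈ s, HasFDerivWithinAt polarCoord.symm (B p) s p := fun p _ =>
    (hasFDerivAt_polarCoord_symm p).hasFDerivWithinAt
  have B_det : ∀ p, (B p).det = p.1 := by
    intro p
    conv_rhs => rw [← one_mul p.1, ← Real.cos_sq_add_sin_sq p.2]
    simp only [hB, neg_mul, LinearMap.det_toContinuousLinearMap, LinearMap.det_toLin,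
      Matrix.det_fin_two_of, sub_neg_eq_add]
    ring
  have hinj : InjOn polarCoord.symm s := polarCoord.symm.injOn.mono hsub
  have himg := lintegral_image_eq_lintegral_abs_det_fderiv_mul volume hs A hinj F
  have hcongr : ∫⁻ p in s, ENNReal.ofReal p.1 * F (polarCoord.symm p)
      = ∫⁻ p in s, ENNReal.ofReal |(B p).det| * F (polarCoord.symm p) := by
    refine setLIntegral_congr_fun hs (fun p hp => ?_)
    rw [B_det, abs_of_pos (hsub hp).1]
  rw [hcongr, ← himg]
  exact setLIntegral_le_lintegral _ _

lemma lintegral_inv_Ioi_top {a c : ℝ} (ha : 0 < a) (hc : 0 < c) :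
    ∫⁻ x in Ioi a, ENNReal.ofReal (c / x) = ⊤ := by
  by_contra hcon
  have hfin : ∫⁻ x in Ioi a, ENNReal.ofReal (c / x) < ⊤ := lt_top_iff_ne_top.mpr hcon
  have hint : IntegrableOn (fun x : ℝ => c / x) (Ioi a) := by
    refine ⟨(measurable_const.div measurable_id).aestronglyMeasurable, ?_⟩
    simp only [HasFiniteIntegral, ← ofReal_norm_eq_enorm]
    have : ∀ᵐ x ∂(volume.restrict (Ioi a)), ENNReal.ofReal ‖c / x‖ = ENNReal.ofReal (c / x) := by
      refine (ae_restrict_iff' measurableSet_Ioi).mpr (Filter.Eventually.of_forall ?_)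
      intro x hx
      rw [Real.norm_eq_abs, abs_of_nonneg (div_nonneg hc.le (le_of_lt (ha.trans hx)))]
    rwa [lintegral_congr_ae this]
  have hint2 : IntegrableOn (fun x : ℝ => x ^ (-1 : ℝ)) (Ioi a) := by
    have h' : IntegrableOn (fun x : ℝ => 1/c * (c / x)) (Ioi a) := hint.const_mul (1/c)
    refine IntegrableOn.congr_fun h' ?_ measurableSet_Ioi
    intro x hx
    have hx0 : 0 < x := ha.trans hx
    show 1 / c * (c / x) = x ^ (-1 : ℝ)
    rw [Real.rpow_neg_one]
    field_simp
  rw [integrableOn_Ioi_rpow_iff ha] at hint2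
  linarith

open Real in
def circTo (R : ℝ) : ℝ → ℂ := fun t => (R:ℂ) * Complex.exp (((π*t - π : ℝ) : ℂ) * Complex.I)

open Real in
lemma circ_hasDerivAt (R t : ℝ) : HasDerivAt (circTo R)
    ((R:ℂ) * (Complex.exp (((π*t - π : ℝ) : ℂ) * Complex.I) * (((π:ℝ):ℂ) * Complex.I))) t := by
  have h1 : HasDerivAt (fun t : ℝ => (π*t - π : ℝ)) π t := by
    simpa using ((hasDerivAt_id t).const_mul π).sub_const π
  have h3 : HasDerivAt (fun t : ℝ => ((π*t - π : ℝ) : ℂ) * Complex.I)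
      (((π:ℝ):ℂ) * Complex.I) t := h1.ofReal_comp.mul_const Complex.I
  exact (h3.cexp).const_mul (R:ℂ)

open Real in
lemma circTo_eq (R t : ℝ) :
    circTo R t = (⟨R * Real.cos (π*t - π), R * Real.sin (π*t - π)⟩ : ℂ) := by
  rw [complex_mk_eq, circTo, Complex.exp_mul_I, ← Complex.ofReal_cos, ← Complex.ofReal_sin]
  push_cast
  ring

open Real in
lemma circ_deriv (R t : ℝ) : deriv (circTo R) t
    = (R:ℂ) * (Complex.exp (((π*t - π : ℝ) : ℂ) * Complex.I) * (((π:ℝ):ℂ) * Complex.I)) :=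
  (circ_hasDerivAt R t).deriv

open Real in
lemma circ_deriv_norm (R t : ℝ) (hR : 0 ≤ R) : ‖deriv (circTo R) t‖ = π * R := by
  rw [circ_deriv]
  simp only [norm_mul, Complex.norm_exp_ofReal_mul_I, Complex.norm_real,
    Real.norm_eq_abs, Complex.norm_I, abs_of_nonneg hR, abs_of_nonneg pi_pos.le]
  ring

open Real in
def circSeg (R : ℝ) : PCurve where
  toFun := circTo R
  continuousOn := fun t _ => ((circ_hasDerivAt R t).continuousAt).continuousWithinAt
  exceptional := ∅
  differentiableAt := fun t _ => (circ_hasDerivAt R t).differentiableAt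
  derivContinuousOn := by
    have hcont : Continuous fun t : ℝ =>
        (R:ℂ) * (Complex.exp (((π*t - π : ℝ) : ℂ) * Complex.I) * (((π:ℝ):ℂ) * Complex.I)) := by
      refine continuous_const.mul (Continuous.mul ?_ continuous_const)
      exact Complex.continuous_exp.comp
        ((Complex.continuous_ofReal.comp
          ((continuous_const.mul continuous_id).sub continuous_const)).mul continuous_const)
    exact hcont.continuousOn.congr fun t _ => circ_deriv R t

open Real in
lemma modulus_top_of_deep {I J : Set ℂ} {x₀ : ℝ} (hx₀ : 1 ≤ x₀)
    (hI : ∀ x, x ≤ -x₀ → (⟨x, 0⟩ : ℂ) ∈ I) (hJ : ∀ x, x₀ ≤ x → (⟨x, 0⟩ : ℂ) ∈ J) :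
    modulus (connecting I J chimney) = ⊤ := by
  rw [modulus, iInf_eq_top]
  intro ρ
  rw [iInf_eq_top]
  intro hadm
  obtain ⟨hmeas, hadmis⟩ := hadm
  have hx₀0 : (0:ℝ) < x₀ := lt_of_lt_of_le one_pos hx₀
  -- ring bound
  have hring : ∀ R : ℝ, x₀ < R →
      ENNReal.ofReal (1/(4*π*R^2)) ≤
        ∫⁻ θ in Ioo (-π) 0, ρ (⟨R * Real.cos θ, R * Real.sin θ⟩ : ℂ)^2 := by
    intro R hR
    have hR0 : 0 < R := hx₀0.trans hR
    have hmemb : circSeg R ∈ connecting I J chimney := by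
      refine ⟨fun t ht => ?_, Or.inl ⟨?_, ?_⟩⟩
      · show circTo R t ∈ chimney
        rw [circTo_eq]
        left
        show R * Real.sin (π*t - π) < 0
        have hs : Real.sin (π*t - π) < 0 := by
          apply Real.sin_neg_of_neg_of_neg_pi_lt
          · nlinarith [ht.2, pi_pos]
          · nlinarith [ht.1, pi_pos]
        nlinarith
      · show circTo R 0 ∈ I
        have h0 : circTo R 0 = (⟨-R, 0⟩ : ℂ) := by
          rw [circTo_eq, mul_zero, zero_sub, Real.cos_neg, Real.sin_neg, Real.cos_pi,
            Real.sin_pi]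
          norm_num [Complex.mk.injEq]
        rw [h0]
        exact hI (-R) (by linarith)
      · show circTo R 1 ∈ J
        have h1 : circTo R 1 = (⟨R, 0⟩ : ℂ) := by
          rw [circTo_eq, mul_one, sub_self, Real.cos_zero, Real.sin_zero]
          norm_num [Complex.mk.injEq]
        rw [h1]
        exact hJ R hR.le
    have h1 := hadmis _ hmemb
    have hcirc_cont : Continuous (circTo R) :=
      continuous_iff_continuousAt.mpr fun t => (circ_hasDerivAt R t).continuousAt
    have hmg : Measurable fun t : ℝ => ρ (circTo R t) := hmeas.comp hcirc_cont.measurable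
    have hπR : (0:ℝ) < π * R := by positivity
    have hrw : curveLIntegral ρ (circSeg R)
        = (∫⁻ t in Ioo (0:ℝ) 1, ρ (circTo R t)) * ENNReal.ofReal (π*R) := by
      rw [curveLIntegral, ← lintegral_mul_const'' _ hmg.aemeasurable]
      refine setLIntegral_congr_fun measurableSet_Ioo ?_
      intro t _
      show ρ (circTo R t) * ENNReal.ofReal ‖deriv (circTo R) t‖ = _
      rw [circ_deriv_norm R t hR0.le]
    rw [hrw] at h1
    have hne0 : (ENNReal.ofReal (π*R)) ≠ 0 := by
      simp only [ne_eq, ENNReal.ofReal_eq_zero, not_le]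
      exact hπR
    have h2 : (ENNReal.ofReal (π*R))⁻¹ ≤ ∫⁻ t in Ioo (0:ℝ) 1, ρ (circTo R t) := by
      calc (ENNReal.ofReal (π*R))⁻¹ = 1 * (ENNReal.ofReal (π*R))⁻¹ := (one_mul _).symm
        _ ≤ ((∫⁻ t in Ioo (0:ℝ) 1, ρ (circTo R t)) * ENNReal.ofReal (π*R))
              * (ENNReal.ofReal (π*R))⁻¹ := mul_le_mul_left h1 _
        _ = (∫⁻ t in Ioo (0:ℝ) 1, ρ (circTo R t))
              * (ENNReal.ofReal (π*R) * (ENNReal.ofReal (π*R))⁻¹) := by rw [mul_assoc]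
        _ = ∫⁻ t in Ioo (0:ℝ) 1, ρ (circTo R t) := by
            rw [ENNReal.mul_inv_cancel hne0 ENNReal.ofReal_ne_top, mul_one]
    have h3 := lintegral_sq_lower hmg hπR h2
    have hmkθ : Measurable fun θ : ℝ => (⟨R * Real.cos θ, R * Real.sin θ⟩ : ℂ) :=
      Complex.measurableEquivRealProd.symm.measurable.comp
        ((measurable_const.mul Real.measurable_cos).prodMk
          (measurable_const.mul Real.measurable_sin))
    have hfθ : Measurable fun θ : ℝ => ρ (⟨R * Real.cos θ, R * Real.sin θ⟩ : ℂ)^2 :=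
      (hmeas.comp hmkθ).pow_const 2
    have hpre : (fun t : ℝ => π*t + (-π)) ⁻¹' (Ioo (-π) 0) = Ioo (0:ℝ) 1 := by
      ext t
      simp only [mem_preimage, mem_Ioo]
      constructor <;> intro ht <;> constructor <;> nlinarith [pi_pos, ht.1, ht.2]
    have hcv := setLIntegral_affine hfθ (ne_of_gt pi_pos) (-π)
      (measurableSet_Ioo (a := -π) (b := (0:ℝ)))
    rw [hpre] at hcv
    have hinner : (∫⁻ t in Ioo (0:ℝ) 1,
        ρ (⟨R * Real.cos (π*t + -π), R * Real.sin (π*t + -π)⟩ : ℂ)^2)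
        = ∫⁻ t in Ioo (0:ℝ) 1, ρ (circTo R t)^2 := by
      refine lintegral_congr fun t => ?_
      rw [circTo_eq]
      ring_nf
    rw [hinner] at hcv
    calc ENNReal.ofReal (1/(4*π*R^2))
        = ENNReal.ofReal π * ENNReal.ofReal (1/(4*(π*R)^2)) := by
          rw [← ENNReal.ofReal_mul pi_pos.le]
          congr 1
          field_simp
      _ ≤ ENNReal.ofReal π * ∫⁻ t in Ioo (0:ℝ) 1, ρ (circTo R t)^2 := mul_le_mul_right h3 _
      _ = ∫⁻ θ in Ioo (-π) 0, ρ (⟨R * Real.cos θ, R * Real.sin θ⟩ : ℂ)^2 := by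
          rw [hcv, abs_of_pos pi_pos]
  -- Fubini + polar coordinates
  have hF : Measurable fun p : ℝ × ℝ => ρ (⟨p.1, p.2⟩ : ℂ)^2 :=
    (measurable_mk_comp hmeas).pow_const 2
  have h0 : ∫⁻ z : ℂ, ρ z ^ 2 = ∫⁻ p : ℝ × ℝ, ρ (⟨p.1, p.2⟩ : ℂ)^2 := by
    rw [← (Complex.volume_preserving_equiv_real_prod.symm _).lintegral_comp
      (hmeas.pow_const 2)]
    rfl
  have hs : MeasurableSet (Ioi x₀ ×ˢ Ioo (-π) (0:ℝ)) := measurableSet_Ioi.prod measurableSet_Ioo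
  have hsub : Ioi x₀ ×ˢ Ioo (-π) (0:ℝ) ⊆ polarCoord.target := by
    rw [polarCoord_target]
    rintro ⟨r, θ⟩ ⟨hr, hθ⟩
    exact ⟨hx₀0.trans hr, hθ.1, hθ.2.trans pi_pos⟩
  have hpolar := lintegral_polar_le (fun p => ρ (⟨p.1, p.2⟩ : ℂ)^2) hs hsub
  have hG : Measurable fun p : ℝ × ℝ =>
      ENNReal.ofReal p.1 * ρ (⟨p.1 * Real.cos p.2, p.1 * Real.sin p.2⟩ : ℂ)^2 := by
    have hmk2 : Measurable fun p : ℝ × ℝ => (⟨p.1 * Real.cos p.2, p.1 * Real.sin p.2⟩ : ℂ) :=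
      Complex.measurableEquivRealProd.symm.measurable.comp
        ((measurable_fst.mul (Real.measurable_cos.comp measurable_snd)).prodMk
          (measurable_fst.mul (Real.measurable_sin.comp measurable_snd)))
    exact measurable_fst.ennreal_ofReal.mul ((hmeas.comp hmk2).pow_const 2)
  rw [eq_top_iff, h0]
  calc (⊤:ℝ≥0∞) = ∫⁻ r in Ioi x₀, ENNReal.ofReal ((1/(4*π))/r) :=
        (lintegral_inv_Ioi_top hx₀0 (by positivity)).symm
    _ ≤ ∫⁻ r in Ioi x₀, ∫⁻ θ in Ioo (-π) 0,
          ENNReal.ofReal r * ρ (⟨r * Real.cos θ, r * Real.sin θ⟩ : ℂ)^2 := by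
        refine setLIntegral_mono' measurableSet_Ioi fun r hr => ?_
        have hr0 : 0 < r := hx₀0.trans hr
        have hfr : Measurable fun θ : ℝ => ρ (⟨r * Real.cos θ, r * Real.sin θ⟩ : ℂ)^2 :=
          (hmeas.comp (Complex.measurableEquivRealProd.symm.measurable.comp
            ((measurable_const.mul Real.measurable_cos).prodMk
              (measurable_const.mul Real.measurable_sin)))).pow_const 2
        rw [lintegral_const_mul _ hfr]
        calc ENNReal.ofReal ((1/(4*π))/r)
            = ENNReal.ofReal r * ENNReal.ofReal (1/(4*π*r^2)) := by
              rw [← ENNReal.ofReal_mul hr0.le]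
              congr 1
              field_simp
          _ ≤ ENNReal.ofReal r * ∫⁻ θ in Ioo (-π) 0,
                ρ (⟨r * Real.cos θ, r * Real.sin θ⟩ : ℂ)^2 :=
              mul_le_mul_right (hring r hr) _
    _ = ∫⁻ p in Ioi x₀ ×ˢ Ioo (-π) (0:ℝ),
          ENNReal.ofReal p.1 * ρ (⟨p.1 * Real.cos p.2, p.1 * Real.sin p.2⟩ : ℂ)^2 := by
        rw [Measure.volume_eq_prod, ← Measure.prod_restrict, lintegral_prod _ hG.aemeasurable]
    _ = ∫⁻ p in Ioi x₀ ×ˢ Ioo (-π) (0:ℝ),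
          ENNReal.ofReal p.1 * ρ (⟨(polarCoord.symm p).1, (polarCoord.symm p).2⟩ : ℂ)^2 := by
        refine setLIntegral_congr_fun hs (fun p _ => ?_)
        rw [polarCoord_symm_apply]
    _ ≤ ∫⁻ p : ℝ × ℝ, ρ (⟨p.1, p.2⟩ : ℂ)^2 := hpolar

lemma gPlus_re_ge (t : ℝ) : 1 ≤ (gPlus t).re := by
  unfold gPlus
  split_ifs with h
  · show (1:ℝ) ≤ 1 - t; linarith
  · exact le_rfl

lemma gMinus_re_le (t : ℝ) : (gMinus t).re ≤ -1 := by
  unfold gMinus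
  split_ifs with h
  · show (-1 + t : ℝ) ≤ -1; linarith
  · exact le_rfl

lemma gMinus_eq_col {t y : ℝ} (hy : 0 < y) (h : gMinus t = (⟨-1, y⟩ : ℂ)) : t = y := by
  unfold gMinus at h
  split_ifs at h with ht
  · exfalso
    have := congrArg Complex.im h
    simp only at this
    linarith
  · have := congrArg Complex.im h
    simpa using this

lemma gPlus_eq_col {t y : ℝ} (hy : 0 < y) (h : gPlus t = (⟨1, y⟩ : ℂ)) : t = y := by
  unfold gPlus at h
  split_ifs at h with ht
  · exfalso
    have := congrArg Complex.im h
    simp only at this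
    linarith
  · have := congrArg Complex.im h
    simpa using this

lemma gMinus_eq_ray {t x : ℝ} (h : gMinus t = (⟨x, 0⟩ : ℂ)) : t = x + 1 := by
  unfold gMinus at h
  split_ifs at h with ht
  · have := congrArg Complex.re h
    simp only at this
    linarith
  · exfalso
    have := congrArg Complex.im h
    simp only at this
    push_neg at ht
    linarith

lemma gPlus_eq_ray {t x : ℝ} (h : gPlus t = (⟨x, 0⟩ : ℂ)) : t = 1 - x := by
  unfold gPlus at h
  split_ifs at h with ht
  · have := congrArg Complex.re h
    simp only at this
    linarith
  · exfalso
    have := congrArg Complex.im h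
    simp only at this
    push_neg at ht
    linarith

lemma gMinus_col {y : ℝ} (hy : 0 ≤ y) : gMinus y = (⟨-1, y⟩ : ℂ) := by
  unfold gMinus
  split_ifs with h
  · have : y = 0 := le_antisymm h hy
    rw [this]
    norm_num [Complex.mk.injEq]
  · rfl

lemma gPlus_col {y : ℝ} (hy : 0 ≤ y) : gPlus y = (⟨1, y⟩ : ℂ) := by
  unfold gPlus
  split_ifs with h
  · have : y = 0 := le_antisymm h hy
    rw [this]
    norm_num [Complex.mk.injEq]
  · rfl

lemma gMinus_ray {x : ℝ} (hx : x ≤ -1) : gMinus (x + 1) = (⟨x, 0⟩ : ℂ) := by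
  unfold gMinus
  rw [if_pos (by linarith)]
  norm_num [Complex.mk.injEq]

lemma gPlus_ray {x : ℝ} (hx : 1 ≤ x) : gPlus (1 - x) = (⟨x, 0⟩ : ℂ) := by
  unfold gPlus
  rw [if_pos (by linarith)]
  norm_num [Complex.mk.injEq]

lemma tail_above {s Y : Set ℝ} (hs : s.OrdConnected)
    (hsub : ∀ y ∈ Y, 0 < y → y ∈ s) (h : ¬BddAbove Y) :
    ∃ y₀ : ℝ, 1 ≤ y₀ ∧ ∀ y, y₀ ≤ y → y ∈ s := by
  rw [not_bddAbove_iff] at h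
  obtain ⟨y₁, hy₁Y, hy₁⟩ := h 1
  refine ⟨y₁, hy₁.le, fun y hy => ?_⟩
  obtain ⟨z, hzY, hz⟩ := h y
  exact hs.out (hsub y₁ hy₁Y (by linarith)) (hsub z hzY (by linarith)) ⟨hy, hz.le⟩

lemma tail_below {s Y : Set ℝ} (hs : s.OrdConnected)
    (hsub : ∀ y ∈ Y, y < 0 → y ∈ s) (h : ¬BddBelow Y) :
    ∃ y₀ : ℝ, y₀ ≤ -1 ∧ ∀ y, y ≤ y₀ → y ∈ s := by
  rw [not_bddBelow_iff] at h
  obtain ⟨y₁, hy₁Y, hy₁⟩ := h (-1)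
  refine ⟨y₁, hy₁.le, fun y hy => ?_⟩
  obtain ⟨z, hzY, hz⟩ := h y
  exact hs.out (hsub z hzY (by linarith)) (hsub y₁ hy₁Y (by linarith)) ⟨hz.le, hy⟩

lemma ordConnected_Ioi_union {a b : ℝ} : (Set.Iio a ∪ Set.Ioi b) ⊇ Set.Ioi (max a b) := by
  intro x hx
  right
  exact lt_of_le_of_lt (le_max_right a b) hx

lemma colTailL {A : Set ℂ} (hA : IsChimneyArc A)
    (h : ¬BddAbove {y : ℝ | 0 ≤ y ∧ (⟨-1, y⟩ : ℂ) ∈ A}) :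
    ∃ y₀ : ℝ, ∀ y, y₀ ≤ y → (⟨-1, y⟩ : ℂ) ∈ A := by
  have hnoPlus : ∀ (s : Set ℝ) (y : ℝ), (⟨-1, y⟩ : ℂ) ∉ gPlus '' s := by
    rintro s y ⟨t, _, ht⟩
    have := gPlus_re_ge t
    rw [ht] at this
    norm_num at this
  have key : ∀ (s : Set ℝ), s.OrdConnected →
      (∀ y : ℝ, 0 < y → ((⟨-1, y⟩ : ℂ) ∈ A → y ∈ s)) →
      (∀ y ∈ s, 0 < y → (⟨-1, y⟩ : ℂ) ∈ A) →
      ∃ y₀ : ℝ, ∀ y, y₀ ≤ y → (⟨-1, y⟩ : ℂ) ∈ A := by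
    intro s hs hsub hmem
    obtain ⟨y₀, hy₀1, hy₀⟩ := tail_above (Y := {y : ℝ | 0 ≤ y ∧ (⟨-1, y⟩ : ℂ) ∈ A}) hs
      (fun y hy hy0 => hsub y hy0 hy.2) h
    exact ⟨y₀, fun y hy => hmem y (hy₀ y hy) (by linarith)⟩
  rcases hA with ⟨s, hs, rfl⟩ | ⟨s, hs, rfl⟩ | ⟨s, t, hs, ht, _, _, rfl⟩ |
    ⟨s, t, hs, ht, _, _, rfl⟩ | ⟨a, b, a', b', rfl⟩
  · exfalso
    refine h ⟨0, fun y hy => ?_⟩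
    exact absurd hy.2 (hnoPlus s y)
  · refine key s hs (fun y hy0 hmem => ?_) (fun y hys hy0 => ?_)
    · obtain ⟨t, hts, ht⟩ := hmem
      rwa [← gMinus_eq_col hy0 ht]
    · exact ⟨y, hys, gMinus_col hy0.le⟩
  · refine key t ht (fun y hy0 hmem => ?_) (fun y hyt hy0 => ?_)
    · rcases hmem with hmem | hmem
      · exact absurd hmem (hnoPlus s y)
      · obtain ⟨u, hus, hu⟩ := hmem
        rwa [← gMinus_eq_col hy0 hu]
    · exact Or.inr ⟨y, hyt, gMinus_col hy0.le⟩
  · refine key t ht (fun y hy0 hmem => ?_) (fun y hyt hy0 => ?_)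
    · rcases hmem with hmem | hmem
      · exact absurd hmem (hnoPlus s y)
      · obtain ⟨u, hus, hu⟩ := hmem
        rwa [← gMinus_eq_col hy0 hu]
    · exact Or.inr ⟨y, hyt, gMinus_col hy0.le⟩
  · refine ⟨max 1 (max a' b') + 1, fun y hy => ?_⟩
    have hy0 : (0:ℝ) < y := by
      have := le_max_left 1 (max a' b')
      linarith [le_trans (by linarith : (1:ℝ) ≤ max 1 (max a' b') + 1) hy]
    right
    refine ⟨y, Or.inr ?_, gMinus_col hy0.le⟩
    show b' < y
    have h1 : max a' b' ≤ max 1 (max a' b') := le_max_right _ _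
    have h2 : b' ≤ max a' b' := le_max_right _ _
    linarith

lemma colTailR {A : Set ℂ} (hA : IsChimneyArc A)
    (h : ¬BddAbove {y : ℝ | 0 ≤ y ∧ (⟨1, y⟩ : ℂ) ∈ A}) :
    ∃ y₀ : ℝ, ∀ y, y₀ ≤ y → (⟨1, y⟩ : ℂ) ∈ A := by
  have hnoMinus : ∀ (s : Set ℝ) (y : ℝ), (⟨1, y⟩ : ℂ) ∉ gMinus '' s := by
    rintro s y ⟨t, _, ht⟩
    have := gMinus_re_le t
    rw [ht] at this
    norm_num at this
  have key : ∀ (s : Set ℝ), s.OrdConnected →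
      (∀ y : ℝ, 0 < y → ((⟨1, y⟩ : ℂ) ∈ A → y ∈ s)) →
      (∀ y ∈ s, 0 < y → (⟨1, y⟩ : ℂ) ∈ A) →
      ∃ y₀ : ℝ, ∀ y, y₀ ≤ y → (⟨1, y⟩ : ℂ) ∈ A := by
    intro s hs hsub hmem
    obtain ⟨y₀, hy₀1, hy₀⟩ := tail_above (Y := {y : ℝ | 0 ≤ y ∧ (⟨1, y⟩ : ℂ) ∈ A}) hs
      (fun y hy hy0 => hsub y hy0 hy.2) h
    exact ⟨y₀, fun y hy => hmem y (hy₀ y hy) (by linarith)⟩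
  rcases hA with ⟨s, hs, rfl⟩ | ⟨s, hs, rfl⟩ | ⟨s, t, hs, ht, hbs, _, rfl⟩ |
    ⟨s, t, hs, ht, _, _, rfl⟩ | ⟨a, b, a', b', rfl⟩
  · refine key s hs (fun y hy0 hmem => ?_) (fun y hys hy0 => ?_)
    · obtain ⟨t, hts, ht⟩ := hmem
      rwa [← gPlus_eq_col hy0 ht]
    · exact ⟨y, hys, gPlus_col hy0.le⟩
  · exfalso
    refine h ⟨0, fun y hy => ?_⟩
    exact absurd hy.2 (hnoMinus s y)
  · refine key s hs (fun y hy0 hmem => ?_) (fun y hys hy0 => ?_)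
    · rcases hmem with hmem | hmem
      · obtain ⟨u, hus, hu⟩ := hmem
        rwa [← gPlus_eq_col hy0 hu]
      · exact absurd hmem (hnoMinus t y)
    · exact Or.inl ⟨y, hys, gPlus_col hy0.le⟩
  · refine key s hs (fun y hy0 hmem => ?_) (fun y hys hy0 => ?_)
    · rcases hmem with hmem | hmem
      · obtain ⟨u, hus, hu⟩ := hmem
        rwa [← gPlus_eq_col hy0 hu]
      · exact absurd hmem (hnoMinus t y)
    · exact Or.inl ⟨y, hys, gPlus_col hy0.le⟩
  · refine ⟨max 1 (max a b) + 1, fun y hy => ?_⟩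
    have hy0 : (0:ℝ) < y := by
      linarith [le_trans (by linarith [le_max_left 1 (max a b)] :
        (1:ℝ) ≤ max 1 (max a b) + 1) hy]
    left
    refine ⟨y, Or.inr ?_, gPlus_col hy0.le⟩
    show b < y
    linarith [le_max_right 1 (max a b), le_max_right a b]

lemma rayTailL {A : Set ℂ} (hA : IsChimneyArc A)
    (h : ¬BddBelow {x : ℝ | x ≤ -1 ∧ (⟨x, 0⟩ : ℂ) ∈ A}) :
    ∃ x₀ : ℝ, ∀ x, x ≤ x₀ → (⟨x, 0⟩ : ℂ) ∈ A := by
  have hnoPlus : ∀ (s : Set ℝ) (x : ℝ), x ≤ -1 → (⟨x, 0⟩ : ℂ) ∉ gPlus '' s := by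
    rintro s x hx ⟨t, _, ht⟩
    have := gPlus_re_ge t
    rw [ht] at this
    simp only at this
    linarith
  have hY' : ¬BddBelow {t : ℝ | t ≤ 0 ∧ (⟨t - 1, 0⟩ : ℂ) ∈ A} := by
    intro hb
    refine h ?_
    obtain ⟨c, hc⟩ := hb
    refine ⟨c - 1, fun x hx => ?_⟩
    have : x + 1 ∈ {t : ℝ | t ≤ 0 ∧ (⟨t - 1, 0⟩ : ℂ) ∈ A} := by
      refine ⟨by linarith [hx.1], ?_⟩
      have : x + 1 - 1 = x := by ring
      rw [this]
      exact hx.2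
    have := hc this
    linarith
  have key : ∀ (s : Set ℝ), s.OrdConnected →
      (∀ t : ℝ, t < 0 → ((⟨t - 1, 0⟩ : ℂ) ∈ A → t ∈ s)) →
      (∀ t ∈ s, t ≤ -1 → (⟨t - 1, 0⟩ : ℂ) ∈ A) →
      ∃ x₀ : ℝ, ∀ x, x ≤ x₀ → (⟨x, 0⟩ : ℂ) ∈ A := by
    intro s hs hsub hmem
    obtain ⟨t₀, ht₀1, ht₀⟩ := tail_below (Y := {t : ℝ | t ≤ 0 ∧ (⟨t - 1, 0⟩ : ℂ) ∈ A}) hs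
      (fun t htY ht0 => hsub t ht0 htY.2) hY'
    refine ⟨t₀ - 1, fun x hx => ?_⟩
    have h1 : x + 1 ≤ t₀ := by linarith
    have h2 := hmem (x + 1) (ht₀ _ h1) (by linarith)
    have : x + 1 - 1 = x := by ring
    rwa [this] at h2
  rcases hA with ⟨s, hs, rfl⟩ | ⟨s, hs, rfl⟩ | ⟨s, t, hs, ht, _, _, rfl⟩ |
    ⟨s, t, hs, ht, _, _, rfl⟩ | ⟨a, b, a', b', rfl⟩
  · exfalso
    refine h ⟨0, fun x hx => ?_⟩
    exact absurd hx.2 (hnoPlus s x hx.1)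
  · refine key s hs (fun t ht0 hmem => ?_) (fun t hts ht1 => ?_)
    · obtain ⟨u, hus, hu⟩ := hmem
      have := gMinus_eq_ray hu
      rw [this] at hus
      have : t - 1 + 1 = t := by ring
      rwa [this] at hus
    · have h2 := gMinus_ray (x := t - 1) (by linarith)
      have h3 : t - 1 + 1 = t := by ring
      rw [h3] at h2
      exact ⟨t, hts, h2⟩
  · refine key t ht (fun u hu0 hmem => ?_) (fun u hut hu1 => ?_)
    · rcases hmem with hmem | hmem
      · exact absurd hmem (hnoPlus s (u - 1) (by linarith))
      · obtain ⟨w, hws, hw⟩ := hmem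
        have := gMinus_eq_ray hw
        rw [this] at hws
        have h3 : u - 1 + 1 = u := by ring
        rwa [h3] at hws
    · right
      have h2 := gMinus_ray (x := u - 1) (by linarith)
      have h3 : u - 1 + 1 = u := by ring
      rw [h3] at h2
      exact ⟨u, hut, h2⟩
  · refine key t ht (fun u hu0 hmem => ?_) (fun u hut hu1 => ?_)
    · rcases hmem with hmem | hmem
      · exact absurd hmem (hnoPlus s (u - 1) (by linarith))
      · obtain ⟨w, hws, hw⟩ := hmem
        have := gMinus_eq_ray hw
        rw [this] at hws
        have h3 : u - 1 + 1 = u := by ring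
        rwa [h3] at hws
    · right
      have h2 := gMinus_ray (x := u - 1) (by linarith)
      have h3 : u - 1 + 1 = u := by ring
      rw [h3] at h2
      exact ⟨u, hut, h2⟩
  · refine ⟨min a' (-1) - 2, fun x hx => ?_⟩
    have hx1 : x ≤ -1 := by
      have := min_le_right a' (-1)
      linarith
    right
    refine ⟨x + 1, Or.inl ?_, gMinus_ray hx1⟩
    show x + 1 < a'
    have := min_le_left a' (-1)
    linarith

lemma rayTailR {A : Set ℂ} (hA : IsChimneyArc A)
    (h : ¬BddAbove {x : ℝ | 1 ≤ x ∧ (⟨x, 0⟩ : ℂ) ∈ A}) :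
    ∃ x₀ : ℝ, ∀ x, x₀ ≤ x → (⟨x, 0⟩ : ℂ) ∈ A := by
  have hnoMinus : ∀ (s : Set ℝ) (x : ℝ), 1 ≤ x → (⟨x, 0⟩ : ℂ) ∉ gMinus '' s := by
    rintro s x hx ⟨t, _, ht⟩
    have := gMinus_re_le t
    rw [ht] at this
    simp only at this
    linarith
  have hY' : ¬BddBelow {t : ℝ | t ≤ 0 ∧ (⟨1 - t, 0⟩ : ℂ) ∈ A} := by
    intro hb
    refine h ?_
    obtain ⟨c, hc⟩ := hb
    refine ⟨1 - c, fun x hx => ?_⟩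
    have hm : 1 - x ∈ {t : ℝ | t ≤ 0 ∧ (⟨1 - t, 0⟩ : ℂ) ∈ A} := by
      refine ⟨by linarith [hx.1], ?_⟩
      have : 1 - (1 - x) = x := by ring
      rw [this]
      exact hx.2
    have := hc hm
    linarith
  have key : ∀ (s : Set ℝ), s.OrdConnected →
      (∀ t : ℝ, t < 0 → ((⟨1 - t, 0⟩ : ℂ) ∈ A → t ∈ s)) →
      (∀ t ∈ s, t ≤ 0 → (⟨1 - t, 0⟩ : ℂ) ∈ A) →
      ∃ x₀ : ℝ, ∀ x, x₀ ≤ x → (⟨x, 0⟩ : ℂ) ∈ A := by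
    intro s hs hsub hmem
    obtain ⟨t₀, ht₀1, ht₀⟩ := tail_below (Y := {t : ℝ | t ≤ 0 ∧ (⟨1 - t, 0⟩ : ℂ) ∈ A}) hs
      (fun t htY ht0 => hsub t ht0 htY.2) hY'
    refine ⟨1 - t₀, fun x hx => ?_⟩
    have h1 : 1 - x ≤ t₀ := by linarith
    have h2 := hmem (1 - x) (ht₀ _ h1) (by linarith)
    have : 1 - (1 - x) = x := by ring
    rwa [this] at h2
  rcases hA with ⟨s, hs, rfl⟩ | ⟨s, hs, rfl⟩ | ⟨s, t, hs, ht, _, _, rfl⟩ |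
    ⟨s, t, hs, ht, _, _, rfl⟩ | ⟨a, b, a', b', rfl⟩
  · refine key s hs (fun t ht0 hmem => ?_) (fun t hts ht1 => ?_)
    · obtain ⟨u, hus, hu⟩ := hmem
      have := gPlus_eq_ray hu
      rw [this] at hus
      have h3 : 1 - (1 - t) = t := by ring
      rwa [h3] at hus
    · have h2 := gPlus_ray (x := 1 - t) (by linarith)
      have h3 : 1 - (1 - t) = t := by ring
      rw [h3] at h2
      exact ⟨t, hts, h2⟩
  · exfalso
    refine h ⟨0, fun x hx => ?_⟩
    exact absurd hx.2 (hnoMinus s x hx.1)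
  · refine key s hs (fun u hu0 hmem => ?_) (fun u hus hu1 => ?_)
    · rcases hmem with hmem | hmem
      · obtain ⟨w, hws, hw⟩ := hmem
        have := gPlus_eq_ray hw
        rw [this] at hws
        have h3 : 1 - (1 - u) = u := by ring
        rwa [h3] at hws
      · exact absurd hmem (hnoMinus t (1 - u) (by linarith))
    · have h2 := gPlus_ray (x := 1 - u) (by linarith)
      have h3 : 1 - (1 - u) = u := by ring
      rw [h3] at h2
      exact Or.inl ⟨u, hus, h2⟩
  · refine key s hs (fun u hu0 hmem => ?_) (fun u hus hu1 => ?_)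
    · rcases hmem with hmem | hmem
      · obtain ⟨w, hws, hw⟩ := hmem
        have := gPlus_eq_ray hw
        rw [this] at hws
        have h3 : 1 - (1 - u) = u := by ring
        rwa [h3] at hws
      · exact absurd hmem (hnoMinus t (1 - u) (by linarith))
    · have h2 := gPlus_ray (x := 1 - u) (by linarith)
      have h3 : 1 - (1 - u) = u := by ring
      rw [h3] at h2
      exact Or.inl ⟨u, hus, h2⟩
  · refine ⟨max 1 (1 - a) + 1, fun x hx => ?_⟩
    have hx1 : 1 ≤ x := by
      have := le_max_left 1 (1 - a)
      linarith
    left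
    refine ⟨1 - x, Or.inl ?_, gPlus_ray hx1⟩
    show 1 - x < a
    have := le_max_right 1 (1 - a)
    linarith

lemma Cminus_re {z : ℂ} (h : z ∈ Cminus) : z.re ≤ -1 := by
  rcases h with ⟨_, h⟩ | ⟨h, _⟩
  · exact h
  · exact le_of_eq h

lemma Cplus_re {z : ℂ} (h : z ∈ Cplus) : 1 ≤ z.re := by
  rcases h with ⟨_, h⟩ | ⟨h, _⟩
  · exact h
  · exact ge_of_eq h

@[simp] lemma Teps_re (ε : ℝ) (z : ℂ) : (Teps ε z).re = z.re := rfl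

@[simp] lemma Teps_im (ε : ℝ) (z : ℂ) : (Teps ε z).im = ε * z.im := rfl

lemma Teps_abs_le {ε : ℝ} (hε0 : 0 ≤ ε) (hε1 : ε ≤ 1) (z : ℂ) :
    ‖(Teps ε z)‖ ≤ ‖z‖ := by
  rw [Complex.norm_def, Complex.norm_def]
  apply Real.sqrt_le_sqrt
  rw [Complex.normSq_apply, Complex.normSq_apply, Teps_re, Teps_im]
  nlinarith [sq_nonneg z.im, sq_nonneg (z.im * (1 - ε))]

lemma Teps_mem_Cminus {ε : ℝ} (hε : 0 ≤ ε) {z : ℂ} (h : z ∈ Cminus) : Teps ε z ∈ Cminus := by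
  rcases h with ⟨him, hre⟩ | ⟨hre, him⟩
  · exact Or.inl ⟨by simp [him], by simpa using hre⟩
  · exact Or.inr ⟨by simpa using hre, by simpa using mul_nonneg hε him⟩

lemma Teps_mem_Cplus {ε : ℝ} (hε : 0 ≤ ε) {z : ℂ} (h : z ∈ Cplus) : Teps ε z ∈ Cplus := by
  rcases h with ⟨him, hre⟩ | ⟨hre, him⟩
  · exact Or.inl ⟨by simp [him], by simpa using hre⟩
  · exact Or.inr ⟨by simpa using hre, by simpa using mul_nonneg hε him⟩

lemma Teps_fix {ε : ℝ} {z : ℂ} (h : z.im = 0) : Teps ε z = z :=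
  Complex.ext rfl (by simp [h])

lemma abs_eq_abs_re {z : ℂ} (h : z.im = 0) : ‖z‖ = |z.re| := by
  have hz : z = ((z.re : ℝ) : ℂ) := by
    apply Complex.ext
    · simp
    · simp [h]
  rw [hz, Complex.norm_real, Real.norm_eq_abs, Complex.ofReal_re]

lemma exists_interior_pos_im (γ : PCurve) {u : ℝ} (hu : u = 0 ∨ u = 1)
    (him : 0 < (γ.toFun u).im) : ∃ t₁ ∈ Ioo (0:ℝ) 1, 0 < (γ.toFun t₁).im := by
  have humem : u ∈ Icc (0:ℝ) 1 := by rcases hu with rfl | rfl <;> norm_num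
  have hne : (𝓝[Ioo (0:ℝ) 1] u).NeBot := by
    rw [← mem_closure_iff_nhdsWithin_neBot, closure_Ioo (by norm_num : (0:ℝ) ≠ 1)]
    exact humem
  have hcw : ContinuousWithinAt (fun t => (γ.toFun t).im) (Ioo (0:ℝ) 1) u :=
    ((Complex.continuous_im.comp_continuousOn γ.continuousOn) u humem).mono
      Ioo_subset_Icc_self
  have hev : ∀ᶠ t in 𝓝[Ioo (0:ℝ) 1] u, 0 < (γ.toFun t).im :=
    hcw.eventually (eventually_gt_nhds him)
  exact (hev.and self_mem_nhdsWithin).exists.imp fun t ht => ⟨ht.2, ht.1⟩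

lemma point_in_ball {I' J' : Set ℂ} (hIc : I' ⊆ Cminus) (hJc : J' ⊆ Cplus)
    {R₀ : ℝ} (hR₀ : 2 ≤ R₀)
    (hcol : (∀ z ∈ I', z.re = -1 → ‖z‖ ≤ R₀) ∨
            (∀ z ∈ J', z.re = 1 → ‖z‖ ≤ R₀))
    (hray : (∀ z ∈ I', z.im = 0 → ‖z‖ ≤ R₀) ∨
            (∀ z ∈ J', z.im = 0 → ‖z‖ ≤ R₀))
    {ε : ℝ} (hε : 0 < ε) (hε1 : ε ≤ 1)
    {γ : PCurve} (hint : ∀ t ∈ Ioo (0:ℝ) 1, γ.toFun t ∈ chimney)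
    {u v : ℝ} (hu01 : u = 0 ∨ u = 1) (hv01 : v = 0 ∨ v = 1)
    (hu : γ.toFun u ∈ Teps ε '' I') (hv : γ.toFun v ∈ Teps ε '' J') :
    ∃ t ∈ Icc (0:ℝ) 1, ‖(γ.toFun t)‖ ≤ R₀ := by
  have humem : u ∈ Icc (0:ℝ) 1 := by rcases hu01 with rfl | rfl <;> norm_num
  have hvmem : v ∈ Icc (0:ℝ) 1 := by rcases hv01 with rfl | rfl <;> norm_num
  by_cases hza : ‖(γ.toFun u)‖ ≤ R₀
  · exact ⟨u, humem, hza⟩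
  by_cases hzb : ‖(γ.toFun v)‖ ≤ R₀
  · exact ⟨v, hvmem, hzb⟩
  push_neg at hza hzb
  obtain ⟨a, haI, hau⟩ := hu
  obtain ⟨b, hbJ, hbv⟩ := hv
  -- classify the endpoint over I'
  have haC := hIc haI
  have hbC := hJc hbJ
  -- type of u endpoint: ray (im = 0) or col (re = -1, 0 < im)
  have hatype : (γ.toFun u).im = 0 ∨ ((γ.toFun u).re = -1 ∧ 0 < (γ.toFun u).im) := by
    rcases haC with ⟨him, _⟩ | ⟨hre, him⟩
    · left; rw [← hau]; simp [him]
    · by_cases h0 : (γ.toFun u).im = 0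
      · exact Or.inl h0
      · right
        constructor
        · rw [← hau]; simpa using hre
        · have : 0 ≤ (γ.toFun u).im := by rw [← hau]; simpa using mul_nonneg hε.le him
          exact lt_of_le_of_ne this (Ne.symm h0)
  have hbtype : (γ.toFun v).im = 0 ∨ ((γ.toFun v).re = 1 ∧ 0 < (γ.toFun v).im) := by
    rcases hbC with ⟨him, _⟩ | ⟨hre, him⟩
    · left; rw [← hbv]; simp [him]
    · by_cases h0 : (γ.toFun v).im = 0
      · exact Or.inl h0
      · right
        constructor
        · rw [← hbv]; simpa using hre
        · have : 0 ≤ (γ.toFun v).im := by rw [← hbv]; simpa using mul_nonneg hε.le him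
          exact lt_of_le_of_ne this (Ne.symm h0)
  -- a ray endpoint exceeds the ray bound; kill (ray,ray) and (col,col)
  have hrayu : (γ.toFun u).im = 0 → ‖(γ.toFun u)‖ = ‖a‖ ∧ a.im = 0 := by
    intro h0
    have haim : a.im = 0 := by
      have : ε * a.im = 0 := by rw [← Teps_im ε a, hau]; exact h0
      rcases mul_eq_zero.mp this with h | h
      · exact absurd h (ne_of_gt hε)
      · exact h
    rw [← hau, Teps_fix haim]
    exact ⟨rfl, haim⟩
  have hrayv : (γ.toFun v).im = 0 → ‖(γ.toFun v)‖ = ‖b‖ ∧ b.im = 0 := by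
    intro h0
    have hbim : b.im = 0 := by
      have : ε * b.im = 0 := by rw [← Teps_im ε b, hbv]; exact h0
      rcases mul_eq_zero.mp this with h | h
      · exact absurd h (ne_of_gt hε)
      · exact h
    rw [← hbv, Teps_fix hbim]
    exact ⟨rfl, hbim⟩
  rcases hatype with hat | hat <;> rcases hbtype with hbt | hbt
  · -- (ray, ray): contradiction with hray
    exfalso
    rcases hray with hb | hb
    · obtain ⟨he, him⟩ := hrayu hat
      have := hb a haI him
      rw [← he] at this
      linarith
    · obtain ⟨he, him⟩ := hrayv hbt
      have := hb b hbJ him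
      rw [← he] at this
      linarith
  · -- (ray u, col v): crossing
    obtain ⟨t₁, ht₁, ht₁pos⟩ := exists_interior_pos_im γ hv01 hbt.2
    have hre : 1 < |(γ.toFun u).re| := by
      have := abs_eq_abs_re hat
      rw [this] at hza
      linarith
    obtain ⟨t, htmem, ht⟩ := cross_lemma γ.continuousOn hint humem ht₁ (le_of_eq hat) hre ht₁pos
    exact ⟨t, htmem, le_trans ht (by linarith)⟩
  · -- (col u, ray v): crossing
    obtain ⟨t₁, ht₁, ht₁pos⟩ := exists_interior_pos_im γ hu01 hat.2
    have hre : 1 < |(γ.toFun v).re| := by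
      have := abs_eq_abs_re hbt
      rw [this] at hzb
      linarith
    obtain ⟨t, htmem, ht⟩ := cross_lemma γ.continuousOn hint hvmem ht₁ (le_of_eq hbt) hre ht₁pos
    exact ⟨t, htmem, le_trans ht (by linarith)⟩
  · -- (col, col): contradiction with hcol
    exfalso
    rcases hcol with hb | hb
    · have hare : a.re = -1 := by
        have : (γ.toFun u).re = a.re := by rw [← hau]; simp
        rw [← this, hat.1]
      have h1 := hb a haI hare
      have h2 : ‖(γ.toFun u)‖ ≤ ‖a‖ := by
        rw [← hau]; exact Teps_abs_le hε.le hε1 a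
      linarith
    · have hbre : b.re = 1 := by
        have : (γ.toFun v).re = b.re := by rw [← hbv]; simp
        rw [← this, hbt.1]
      have h1 := hb b hbJ hbre
      have h2 : ‖(γ.toFun v)‖ ≤ ‖b‖ := by
        rw [← hbv]; exact Teps_abs_le hε.le hε1 b
      linarith

lemma family_admissible {I' J' : Set ℂ} (hIc : I' ⊆ Cminus) (hJc : J' ⊆ Cplus)
    {R₀ : ℝ} (hR₀ : 2 ≤ R₀)
    (hcol : (∀ z ∈ I', z.re = -1 → ‖z‖ ≤ R₀) ∨
            (∀ z ∈ J', z.re = 1 → ‖z‖ ≤ R₀))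
    (hray : (∀ z ∈ I', z.im = 0 → ‖z‖ ≤ R₀) ∨
            (∀ z ∈ J', z.im = 0 → ‖z‖ ≤ R₀))
    {ε : ℝ} (hε : 0 < ε) (hε1 : ε ≤ 1)
    {γ : PCurve} (hγ : γ ∈ connecting (Teps ε '' I') (Teps ε '' J') chimney) :
    1 ≤ curveLIntegral (ballRho (R₀ + 2)) γ := by
  obtain ⟨hint, hends⟩ := hγ
  have hpoint : ∃ t ∈ Icc (0:ℝ) 1, ‖(γ.toFun t)‖ ≤ R₀ := by
    rcases hends with ⟨h0, h1⟩ | ⟨h0, h1⟩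
    · exact point_in_ball hIc hJc hR₀ hcol hray hε hε1 hint (Or.inl rfl) (Or.inr rfl) h0 h1
    · exact point_in_ball hIc hJc hR₀ hcol hray hε hε1 hint (Or.inr rfl) (Or.inl rfl) h1 h0
  obtain ⟨tp, htp, htpball⟩ := hpoint
  by_cases hall : ∀ t ∈ Icc (0:ℝ) 1, ‖(γ.toFun t)‖ ≤ R₀ + 2
  · -- whole curve in the ball; endpoints are 2 apart
    have hgap : 2 ≤ ‖(γ.toFun 1 - γ.toFun 0)‖ := by
      have hre : 2 ≤ |(γ.toFun 1 - γ.toFun 0).re| := by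
        rcases hends with ⟨h0, h1⟩ | ⟨h0, h1⟩
        · obtain ⟨a, haI, hau⟩ := h0
          obtain ⟨b, hbJ, hbv⟩ := h1
          have ha : (γ.toFun 0).re ≤ -1 := by
            rw [← hau]; exact Cminus_re (Teps_mem_Cminus hε.le (hIc haI))
          have hb : 1 ≤ (γ.toFun 1).re := by
            rw [← hbv]; exact Cplus_re (Teps_mem_Cplus hε.le (hJc hbJ))
          rw [Complex.sub_re, abs_of_nonneg (by linarith)]
          linarith
        · obtain ⟨b, hbJ, hbv⟩ := h0
          obtain ⟨a, haI, hau⟩ := h1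
          have ha : (γ.toFun 1).re ≤ -1 := by
            rw [← hau]; exact Cminus_re (Teps_mem_Cminus hε.le (hIc haI))
          have hb : 1 ≤ (γ.toFun 0).re := by
            rw [← hbv]; exact Cplus_re (Teps_mem_Cplus hε.le (hJc hbJ))
          rw [Complex.sub_re, abs_of_nonpos (by linarith)]
          linarith
      exact le_trans hre (Complex.abs_re_le_norm _)
    exact admissible_ball_curve γ le_rfl le_rfl zero_le_one
      (fun t ht => hall t ht) hgap
  · push_neg at hall
    obtain ⟨w, hwmem, hw⟩ := hall
    obtain ⟨p, q, hp0, hpq, hq1, hball, hgap⟩ :=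
      exit_lemma γ.continuousOn htp hwmem htpball hw.le
    exact admissible_ball_curve γ hp0 hq1 hpq hball hgap


lemma connecting_comm (E F Om : Set ℂ) : connecting E F Om = connecting F E Om := by
  ext γ
  unfold connecting
  simp only [mem_setOf_eq]
  tauto

lemma chimFam_eq (ε : ℝ) (A B : Set ℂ) :
    chimFam ε A B = connecting (Teps ε '' A) (Teps ε '' B) chimney := rfl

lemma colBound_minus {A : Set ℂ} (h : BddAbove {y : ℝ | 0 ≤ y ∧ (⟨-1, y⟩ : ℂ) ∈ A}) :
    ∃ B : ℝ, ∀ z ∈ A ∩ Cminus, z.re = -1 → ‖z‖ ≤ B := by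
  obtain ⟨Y, hY⟩ := h
  refine ⟨1 + max Y 0, fun z hz hre => ?_⟩
  have him : 0 ≤ z.im := by
    rcases hz.2 with ⟨h0, _⟩ | ⟨_, h0⟩
    · rw [h0]
    · exact h0
  have hzI : z.im ∈ {y : ℝ | 0 ≤ y ∧ (⟨-1, y⟩ : ℂ) ∈ A} := by
    refine ⟨him, ?_⟩
    have : (⟨-1, z.im⟩ : ℂ) = z := Complex.ext (by rw [hre]) rfl
    rw [this]
    exact hz.1
  have hle := hY hzI
  calc ‖z‖ ≤ |z.re| + |z.im| := Complex.norm_le_abs_re_add_abs_im z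
    _ = 1 + z.im := by rw [hre, abs_of_nonneg him]; norm_num
    _ ≤ 1 + max Y 0 := by linarith [le_max_left Y 0]

lemma colBound_plus {A : Set ℂ} (h : BddAbove {y : ℝ | 0 ≤ y ∧ (⟨1, y⟩ : ℂ) ∈ A}) :
    ∃ B : ℝ, ∀ z ∈ A ∩ Cplus, z.re = 1 → ‖z‖ ≤ B := by
  obtain ⟨Y, hY⟩ := h
  refine ⟨1 + max Y 0, fun z hz hre => ?_⟩
  have him : 0 ≤ z.im := by
    rcases hz.2 with ⟨h0, _⟩ | ⟨_, h0⟩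
    · rw [h0]
    · exact h0
  have hzI : z.im ∈ {y : ℝ | 0 ≤ y ∧ (⟨1, y⟩ : ℂ) ∈ A} := by
    refine ⟨him, ?_⟩
    have : (⟨1, z.im⟩ : ℂ) = z := Complex.ext (by rw [hre]) rfl
    rw [this]
    exact hz.1
  have hle := hY hzI
  calc ‖z‖ ≤ |z.re| + |z.im| := Complex.norm_le_abs_re_add_abs_im z
    _ = 1 + z.im := by rw [hre, abs_of_nonneg him]; norm_num
    _ ≤ 1 + max Y 0 := by linarith [le_max_left Y 0]

lemma rayBound_minus {A : Set ℂ} (h : BddBelow {x : ℝ | x ≤ -1 ∧ (⟨x, 0⟩ : ℂ) ∈ A}) :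
    ∃ B : ℝ, ∀ z ∈ A ∩ Cminus, z.im = 0 → ‖z‖ ≤ B := by
  obtain ⟨X, hX⟩ := h
  refine ⟨-X, fun z hz him => ?_⟩
  have hre : z.re ≤ -1 := Cminus_re hz.2
  have hzI : z.re ∈ {x : ℝ | x ≤ -1 ∧ (⟨x, 0⟩ : ℂ) ∈ A} := by
    refine ⟨hre, ?_⟩
    have : (⟨z.re, 0⟩ : ℂ) = z := Complex.ext rfl (by rw [him])
    rw [this]
    exact hz.1
  have hle := hX hzI
  rw [abs_eq_abs_re him, abs_of_nonpos (by linarith)]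
  linarith

lemma rayBound_plus {A : Set ℂ} (h : BddAbove {x : ℝ | 1 ≤ x ∧ (⟨x, 0⟩ : ℂ) ∈ A}) :
    ∃ B : ℝ, ∀ z ∈ A ∩ Cplus, z.im = 0 → ‖z‖ ≤ B := by
  obtain ⟨X, hX⟩ := h
  refine ⟨X, fun z hz him => ?_⟩
  have hre : 1 ≤ z.re := Cplus_re hz.2
  have hzI : z.re ∈ {x : ℝ | 1 ≤ x ∧ (⟨x, 0⟩ : ℂ) ∈ A} := by
    refine ⟨hre, ?_⟩
    have : (⟨z.re, 0⟩ : ℂ) = z := Complex.ext rfl (by rw [him])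
    rw [this]
    exact hz.1
  have hle := hX hzI
  rw [abs_eq_abs_re him, abs_of_nonneg (by linarith)]
  exact hle


/-- Lemma: if `I, J ⊂ ∂C` are disjoint arcs of prime ends with `mod Γ_{I,J} < ∞`, then
`mod Γᵋ_{I₋,J₊}` and `mod Γᵋ_{I₊,J₋}` are bounded for `ε ∈ (0,1]`. -/
theorem chimney_modulus_opposite_bounded (I J : Set ℂ)
    (hI : IsChimneyArc I) (hJ : IsChimneyArc J) (hdisj : Disjoint I J)
    (hfin : modulus (connecting I J chimney) ≠ ⊤) :
    ∃ M : ℝ, ∀ ε : ℝ, 0 < ε → ε ≤ 1 →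
      modulus (chimFam ε (I ∩ Cminus) (J ∩ Cplus)) ≤ ENNReal.ofReal M ∧
      modulus (chimFam ε (I ∩ Cplus) (J ∩ Cminus)) ≤ ENNReal.ofReal M := by
  classical
  -- Step 1: boundedness disjunctions from finiteness of the modulus
  have D1 : BddAbove {y : ℝ | 0 ≤ y ∧ (⟨-1, y⟩ : ℂ) ∈ I}
      ∨ BddAbove {y : ℝ | 0 ≤ y ∧ (⟨1, y⟩ : ℂ) ∈ J} := by
    by_contra hcon
    push_neg at hcon
    obtain ⟨y₀I, hIt⟩ := colTailL hI hcon.1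
    obtain ⟨y₀J, hJt⟩ := colTailR hJ hcon.2
    exact hfin (modulus_top_of_horiz (y₀ := max y₀I y₀J)
      (fun y hy => hIt y (le_trans (le_max_left _ _) hy))
      (fun y hy => hJt y (le_trans (le_max_right _ _) hy)))
  have D2 : BddBelow {x : ℝ | x ≤ -1 ∧ (⟨x, 0⟩ : ℂ) ∈ I}
      ∨ BddAbove {x : ℝ | 1 ≤ x ∧ (⟨x, 0⟩ : ℂ) ∈ J} := by
    by_contra hcon
    push_neg at hcon
    obtain ⟨x₀I, hIt⟩ := rayTailL hI hcon.1
    obtain ⟨x₀J, hJt⟩ := rayTailR hJ hcon.2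
    refine hfin (modulus_top_of_deep (x₀ := max 1 (max (-x₀I) x₀J)) (le_max_left _ _)
      (fun x hx => hIt x ?_) (fun x hx => hJt x ?_))
    · have h1 : -x₀I ≤ max 1 (max (-x₀I) x₀J) :=
        le_trans (le_max_left _ _) (le_max_right _ _)
      linarith
    · exact le_trans (le_trans (le_max_right _ _) (le_max_right _ _)) hx
  have D3 : BddAbove {y : ℝ | 0 ≤ y ∧ (⟨-1, y⟩ : ℂ) ∈ J}
      ∨ BddAbove {y : ℝ | 0 ≤ y ∧ (⟨1, y⟩ : ℂ) ∈ I} := by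
    by_contra hcon
    push_neg at hcon
    obtain ⟨y₀J, hJt⟩ := colTailL hJ hcon.1
    obtain ⟨y₀I, hIt⟩ := colTailR hI hcon.2
    have htop : modulus (connecting J I chimney) = ⊤ :=
      modulus_top_of_horiz (y₀ := max y₀J y₀I)
        (fun y hy => hJt y (le_trans (le_max_left _ _) hy))
        (fun y hy => hIt y (le_trans (le_max_right _ _) hy))
    rw [connecting_comm] at htop
    exact hfin htop
  have D4 : BddBelow {x : ℝ | x ≤ -1 ∧ (⟨x, 0⟩ : ℂ) ∈ J}
      ∨ BddAbove {x : ℝ | 1 ≤ x ∧ (⟨x, 0⟩ : ℂ) ∈ I} := by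
    by_contra hcon
    push_neg at hcon
    obtain ⟨x₀J, hJt⟩ := rayTailL hJ hcon.1
    obtain ⟨x₀I, hIt⟩ := rayTailR hI hcon.2
    have htop : modulus (connecting J I chimney) = ⊤ := by
      refine modulus_top_of_deep (x₀ := max 1 (max (-x₀J) x₀I)) (le_max_left _ _)
        (fun x hx => hJt x ?_) (fun x hx => hIt x ?_)
      · have h1 : -x₀J ≤ max 1 (max (-x₀J) x₀I) :=
          le_trans (le_max_left _ _) (le_max_right _ _)
        linarith
      · exact le_trans (le_trans (le_max_right _ _) (le_max_right _ _)) hx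
    rw [connecting_comm] at htop
    exact hfin htop
  -- Step 2: uniform bound constants
  have E1 : ∃ B : ℝ, (∀ z ∈ I ∩ Cminus, z.re = -1 → ‖z‖ ≤ B)
      ∨ (∀ z ∈ J ∩ Cplus, z.re = 1 → ‖z‖ ≤ B) := by
    rcases D1 with h | h
    · obtain ⟨B, hB⟩ := colBound_minus h; exact ⟨B, Or.inl hB⟩
    · obtain ⟨B, hB⟩ := colBound_plus h; exact ⟨B, Or.inr hB⟩
  have E2 : ∃ B : ℝ, (∀ z ∈ I ∩ Cminus, z.im = 0 → ‖z‖ ≤ B)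
      ∨ (∀ z ∈ J ∩ Cplus, z.im = 0 → ‖z‖ ≤ B) := by
    rcases D2 with h | h
    · obtain ⟨B, hB⟩ := rayBound_minus h; exact ⟨B, Or.inl hB⟩
    · obtain ⟨B, hB⟩ := rayBound_plus h; exact ⟨B, Or.inr hB⟩
  have E3 : ∃ B : ℝ, (∀ z ∈ J ∩ Cminus, z.re = -1 → ‖z‖ ≤ B)
      ∨ (∀ z ∈ I ∩ Cplus, z.re = 1 → ‖z‖ ≤ B) := by
    rcases D3 with h | h
    · obtain ⟨B, hB⟩ := colBound_minus h; exact ⟨B, Or.inl hB⟩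
    · obtain ⟨B, hB⟩ := colBound_plus h; exact ⟨B, Or.inr hB⟩
  have E4 : ∃ B : ℝ, (∀ z ∈ J ∩ Cminus, z.im = 0 → ‖z‖ ≤ B)
      ∨ (∀ z ∈ I ∩ Cplus, z.im = 0 → ‖z‖ ≤ B) := by
    rcases D4 with h | h
    · obtain ⟨B, hB⟩ := rayBound_minus h; exact ⟨B, Or.inl hB⟩
    · obtain ⟨B, hB⟩ := rayBound_plus h; exact ⟨B, Or.inr hB⟩
  obtain ⟨B1, hB1⟩ := E1
  obtain ⟨B2, hB2⟩ := E2
  obtain ⟨B3, hB3⟩ := E3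
  obtain ⟨B4, hB4⟩ := E4
  set R₀ : ℝ := max 2 (max (max B1 B2) (max B3 B4)) with hR₀def
  have hR₀ : 2 ≤ R₀ := le_max_left _ _
  have hB1R : B1 ≤ R₀ :=
    le_trans (le_trans (le_max_left _ _) (le_max_left _ _)) (le_max_right _ _)
  have hB2R : B2 ≤ R₀ :=
    le_trans (le_trans (le_max_right _ _) (le_max_left _ _)) (le_max_right _ _)
  have hB3R : B3 ≤ R₀ :=
    le_trans (le_trans (le_max_left _ _) (le_max_right _ _)) (le_max_right _ _)
  have hB4R : B4 ≤ R₀ :=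
    le_trans (le_trans (le_max_right _ _) (le_max_right _ _)) (le_max_right _ _)
  have hcol1 : (∀ z ∈ I ∩ Cminus, z.re = -1 → ‖z‖ ≤ R₀)
      ∨ (∀ z ∈ J ∩ Cplus, z.re = 1 → ‖z‖ ≤ R₀) :=
    hB1.imp (fun h z hz hp => le_trans (h z hz hp) hB1R)
      (fun h z hz hp => le_trans (h z hz hp) hB1R)
  have hray1 : (∀ z ∈ I ∩ Cminus, z.im = 0 → ‖z‖ ≤ R₀)
      ∨ (∀ z ∈ J ∩ Cplus, z.im = 0 → ‖z‖ ≤ R₀) :=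
    hB2.imp (fun h z hz hp => le_trans (h z hz hp) hB2R)
      (fun h z hz hp => le_trans (h z hz hp) hB2R)
  have hcol2 : (∀ z ∈ J ∩ Cminus, z.re = -1 → ‖z‖ ≤ R₀)
      ∨ (∀ z ∈ I ∩ Cplus, z.re = 1 → ‖z‖ ≤ R₀) :=
    hB3.imp (fun h z hz hp => le_trans (h z hz hp) hB3R)
      (fun h z hz hp => le_trans (h z hz hp) hB3R)
  have hray2 : (∀ z ∈ J ∩ Cminus, z.im = 0 → ‖z‖ ≤ R₀)
      ∨ (∀ z ∈ I ∩ Cplus, z.im = 0 → ‖z‖ ≤ R₀) :=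
    hB4.imp (fun h z hz hp => le_trans (h z hz hp) hB4R)
      (fun h z hz hp => le_trans (h z hz hp) hB4R)
  -- Step 3: the admissible metric and its energy
  have hE := ballRho_energy (R₀ + 2)
  refine ⟨(∫⁻ z : ℂ, ballRho (R₀ + 2) z ^ 2).toReal, fun ε hε hε1 => ⟨?_, ?_⟩⟩
  · have hadm : IsAdmissible (ballRho (R₀ + 2)) (chimFam ε (I ∩ Cminus) (J ∩ Cplus)) := by
      refine ⟨ballRho_measurable _, fun γ hγ => ?_⟩
      rw [chimFam_eq] at hγ
      exact family_admissible inter_subset_right inter_subset_right hR₀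
        hcol1 hray1 hε hε1 hγ
    calc modulus (chimFam ε (I ∩ Cminus) (J ∩ Cplus))
        ≤ ∫⁻ z : ℂ, ballRho (R₀ + 2) z ^ 2 :=
          iInf_le_of_le (ballRho (R₀ + 2)) (iInf_le_of_le hadm le_rfl)
      _ = ENNReal.ofReal (∫⁻ z : ℂ, ballRho (R₀ + 2) z ^ 2).toReal :=
          (ENNReal.ofReal_toReal hE).symm
  · have hadm : IsAdmissible (ballRho (R₀ + 2)) (chimFam ε (I ∩ Cplus) (J ∩ Cminus)) := by
      refine ⟨ballRho_measurable _, fun γ hγ => ?_⟩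
      rw [chimFam_eq, connecting_comm] at hγ
      exact family_admissible inter_subset_right inter_subset_right hR₀
        hcol2 hray2 hε hε1 hγ
    calc modulus (chimFam ε (I ∩ Cplus) (J ∩ Cminus))
        ≤ ∫⁻ z : ℂ, ballRho (R₀ + 2) z ^ 2 :=
          iInf_le_of_le (ballRho (R₀ + 2)) (iInf_le_of_le hadm le_rfl)
      _ = ENNReal.ofReal (∫⁻ z : ℂ, ballRho (R₀ + 2) z ^ 2).toReal :=
          (ENNReal.ofReal_toReal hE).symm

end
end

section
/- In Strebel's chimney domain C: the family Γ⁰ of curves in C connecting the vertical ray {1+iy : y ≥ 0} to the segment [1,2] that also intersect the imaginary axis {Re z = 0} has finite modulus: mod Γ⁰ < ∞. -/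
open MeasureTheory Set

noncomputable section

/-! ### Auxiliary lemmas for the main theorem -/

/-- FTC-type inequality allowing a finite exceptional set. -/
lemma sub_le_integral_of_finite_exceptional (s : Finset ℝ) :
    ∀ (g g' φ : ℝ → ℝ) (a b : ℝ), a ≤ b → ContinuousOn g (Set.Icc a b) →
      (∀ x ∈ Set.Ioo a b \ (s : Set ℝ), HasDerivWithinAt g (g' x) (Set.Ioi x) x) →
      MeasureTheory.IntegrableOn φ (Set.Icc a b) →
      (∀ x ∈ Set.Ioo a b \ (s : Set ℝ), g' x ≤ φ x) →
      g b - g a ≤ ∫ y in a..b, φ y := by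
  classical
  induction s using Finset.induction_on with
  | empty =>
    intro g g' φ a b hab hcont hder hint hb
    exact intervalIntegral.sub_le_integral_of_hasDeriv_right_of_le hab hcont
      (fun x hx => hder x (by simpa using hx)) hint (fun x hx => hb x (by simpa using hx))
  | @insert c s hcs ih =>
    intro g g' φ a b hab hcont hder hint hb
    by_cases hc : c ∈ Set.Ioo a b
    · have h1 : a ≤ c := hc.1.le
      have h2 : c ≤ b := hc.2.le
      have hsub1 : ∀ x, x ∈ Set.Ioo a c \ (s : Set ℝ) →
          x ∈ Set.Ioo a b \ ((insert c s : Finset ℝ) : Set ℝ) := by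
        intro x hx
        refine ⟨Set.Ioo_subset_Ioo le_rfl h2 hx.1, ?_⟩
        simp only [Finset.coe_insert, Set.mem_insert_iff, not_or]
        exact ⟨ne_of_lt hx.1.2, hx.2⟩
      have hsub2 : ∀ x, x ∈ Set.Ioo c b \ (s : Set ℝ) →
          x ∈ Set.Ioo a b \ ((insert c s : Finset ℝ) : Set ℝ) := by
        intro x hx
        refine ⟨Set.Ioo_subset_Ioo h1 le_rfl hx.1, ?_⟩
        simp only [Finset.coe_insert, Set.mem_insert_iff, not_or]
        exact ⟨(ne_of_gt hx.1.1), hx.2⟩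
      have hint1 : MeasureTheory.IntegrableOn φ (Set.Icc a c) :=
        hint.mono_set (Set.Icc_subset_Icc le_rfl h2)
      have hint2 : MeasureTheory.IntegrableOn φ (Set.Icc c b) :=
        hint.mono_set (Set.Icc_subset_Icc h1 le_rfl)
      have key1 := ih g g' φ a c h1 (hcont.mono (Set.Icc_subset_Icc le_rfl h2))
        (fun x hx => hder x (hsub1 x hx)) hint1 (fun x hx => hb x (hsub1 x hx))
      have key2 := ih g g' φ c b h2 (hcont.mono (Set.Icc_subset_Icc h1 le_rfl))
        (fun x hx => hder x (hsub2 x hx)) hint2 (fun x hx => hb x (hsub2 x hx))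
      have hii1 : IntervalIntegrable φ MeasureTheory.volume a c :=
        (intervalIntegrable_iff_integrableOn_Icc_of_le h1).2 hint1
      have hii2 : IntervalIntegrable φ MeasureTheory.volume c b :=
        (intervalIntegrable_iff_integrableOn_Icc_of_le h2).2 hint2
      calc g b - g a = (g c - g a) + (g b - g c) := by ring
        _ ≤ (∫ y in a..c, φ y) + ∫ y in c..b, φ y := add_le_add key1 key2
        _ = ∫ y in a..b, φ y := intervalIntegral.integral_add_adjacent_intervals hii1 hii2
    · refine ih g g' φ a b hab hcont (fun x hx => hder x ?_) hint (fun x hx => hb x ?_) <;>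
      · refine ⟨hx.1, ?_⟩
        simp only [Finset.coe_insert, Set.mem_insert_iff, not_or]
        exact ⟨fun h => hc (h ▸ hx.1), hx.2⟩

/-- IVT helper (increasing version): a continuous function going from `≤ 2` to `≥ 3`
crosses the band `[2,3]` over some subinterval. -/
lemma exists_crossing_le {f : ℝ → ℝ} {c d : ℝ} (hcd : c ≤ d)
    (hf : ContinuousOn f (Set.Icc c d)) (h2 : f c ≤ 2) (h3 : 3 ≤ f d) :
    ∃ u v, c ≤ u ∧ u < v ∧ v ≤ d ∧ f u ≤ 2 ∧ 3 ≤ f v ∧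
      ∀ t ∈ Set.Ioo u v, 2 ≤ f t ∧ f t ≤ 3 := by
  have hcd' : c < d := by
    rcases eq_or_lt_of_le hcd with rfl | h
    · linarith
    · exact h
  set S : Set ℝ := Set.Icc c d ∩ f ⁻¹' Set.Ici 3 with hS
  have hSclosed : IsClosed S := hf.preimage_isClosed_of_isClosed isClosed_Icc isClosed_Ici
  have hSne : S.Nonempty := ⟨d, ⟨⟨hcd, le_rfl⟩, h3⟩⟩
  have hSbdd : BddBelow S := ⟨c, fun x hx => hx.1.1⟩
  set v := sInf S with hv
  have hvS : v ∈ S := hSclosed.csInf_mem hSne hSbdd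
  have hv3 : 3 ≤ f v := hvS.2
  have hvIcc : v ∈ Set.Icc c d := hvS.1
  have hcv : c < v := by
    rcases eq_or_lt_of_le hvIcc.1 with h | h
    · exact absurd hv3 (by rw [← h]; linarith)
    · exact h
  set T : Set ℝ := Set.Icc c v ∩ f ⁻¹' Set.Iic 2 with hT
  have hTclosed : IsClosed T :=
    (hf.mono (Set.Icc_subset_Icc le_rfl hvIcc.2)).preimage_isClosed_of_isClosed
      isClosed_Icc isClosed_Iic
  have hTne : T.Nonempty := ⟨c, ⟨⟨le_rfl, hcv.le⟩, h2⟩⟩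
  have hTbdd : BddAbove T := ⟨v, fun x hx => hx.1.2⟩
  set u := sSup T with hu
  have huT : u ∈ T := hTclosed.csSup_mem hTne hTbdd
  have hu2 : f u ≤ 2 := huT.2
  have huv : u < v := by
    rcases eq_or_lt_of_le huT.1.2 with h | h
    · exact absurd hu2 (by rw [h]; linarith)
    · exact h
  refine ⟨u, v, huT.1.1, huv, hvIcc.2, hu2, hv3, fun t ht => ⟨?_, ?_⟩⟩
  · by_contra h
    push_neg at h
    have : t ∈ T := ⟨⟨huT.1.1.trans ht.1.le, ht.2.le⟩, h.le⟩
    exact absurd (le_csSup hTbdd this) (not_le.2 ht.1)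
  · by_contra h
    push_neg at h
    have : t ∈ S := ⟨⟨huT.1.1.trans ht.1.le, ht.2.le.trans hvIcc.2⟩, h.le⟩
    exact absurd (csInf_le hSbdd this) (not_le.2 ht.2)

/-- IVT helper, either orientation. -/
lemma exists_crossing {f : ℝ → ℝ} {a b : ℝ} (ha : a ∈ Set.Icc (0:ℝ) 1)
    (hb : b ∈ Set.Icc (0:ℝ) 1) (hf : ContinuousOn f (Set.Icc 0 1))
    (h2 : f a ≤ 2) (h3 : 3 ≤ f b) :
    ∃ u v, 0 ≤ u ∧ u < v ∧ v ≤ 1 ∧ 1 ≤ |f v - f u| ∧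
      ∀ t ∈ Set.Ioo u v, 2 ≤ f t ∧ f t ≤ 3 := by
  rcases le_total a b with hab | hab
  · obtain ⟨u, v, h1, h2', h3', h4, h5, h6⟩ :=
      exists_crossing_le hab (hf.mono (Set.Icc_subset_Icc ha.1 hb.2)) h2 h3
    refine ⟨u, v, ha.1.trans h1, h2', h3'.trans hb.2, ?_, h6⟩
    rw [abs_of_nonneg (by linarith)]; linarith
  · -- b ≤ a : apply the increasing version to the reflected function
    set F : ℝ → ℝ := fun t => f (a + b - t) with hF
    have hmaps : Set.MapsTo (fun t => a + b - t) (Set.Icc b a) (Set.Icc b a) := by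
      intro t ht
      exact ⟨by simp only [Set.mem_Icc] at ht ⊢; linarith [ht.2],
             by simp only [Set.mem_Icc] at ht ⊢; linarith [ht.1]⟩
    have hFc : ContinuousOn F (Set.Icc b a) :=
      (hf.mono (Set.Icc_subset_Icc hb.1 ha.2)).comp
        ((continuous_const.sub continuous_id).continuousOn) hmaps
    have hFb : F b ≤ 2 := by simp only [hF]; rw [show a + b - b = a by ring]; exact h2
    have hFa : 3 ≤ F a := by simp only [hF]; rw [show a + b - a = b by ring]; exact h3
    obtain ⟨u, v, h1, h2', h3', h4, h5, h6⟩ := exists_crossing_le hab hFc hFb hFa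
    refine ⟨a + b - v, a + b - u, ?_, by linarith, ?_, ?_, ?_⟩
    · have : v ≤ a := h3'
      have : 0 ≤ b := hb.1
      linarith
    · have : b ≤ u := h1
      have : a ≤ 1 := ha.2
      linarith
    · have h7 : f (a + b - u) ≤ 2 := by
        simpa only [hF] using h4
      have h8 : 3 ≤ f (a + b - v) := by
        simpa only [hF] using h5
      rw [abs_of_nonpos (by linarith)]; linarith
    · intro t ht
      have : a + b - t ∈ Set.Ioo u v := ⟨by linarith [ht.2], by linarith [ht.1]⟩
      have := h6 _ this
      simpa only [hF, show a + b - (a + b - t) = t by ring] using this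


/-- Admissibility of the indicator of the annulus `{2 ≤ |z-3| ≤ 3}` for the family `Γ⁰`. -/
lemma annulus_admissible (γ : PCurve)
    (hγ : γ ∈ connecting {z : ℂ | z.re = 1 ∧ 0 ≤ z.im}
      {z : ℂ | z.im = 0 ∧ 1 ≤ z.re ∧ z.re ≤ 2} chimney)
    (hcross : ∃ t ∈ Set.Icc (0:ℝ) 1, (γ.toFun t).re = 0) :
    1 ≤ curveLIntegral
      ((Metric.closedBall (3:ℂ) 3 \ Metric.ball (3:ℂ) 2).indicator fun _ => 1) γ := by
  classical
  obtain ⟨t₀, ht₀, hre₀⟩ := hcross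
  set f : ℝ → ℝ := fun t => ‖γ.toFun t - 3‖ with hf
  have hfc : ContinuousOn f (Set.Icc 0 1) :=
    continuous_norm.comp_continuousOn (γ.continuousOn.sub continuousOn_const)
  -- the endpoint on the segment [1,2]
  obtain ⟨a, haIcc, haseg⟩ : ∃ a ∈ Set.Icc (0:ℝ) 1,
      (γ.toFun a).im = 0 ∧ 1 ≤ (γ.toFun a).re ∧ (γ.toFun a).re ≤ 2 := by
    rcases hγ.2 with ⟨_, h1⟩ | ⟨h0, _⟩
    · exact ⟨1, by norm_num, h1⟩
    · exact ⟨0, by norm_num, h0⟩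
  have hfa : f a ≤ 2 := by
    have him : (γ.toFun a - 3).im = 0 := by simp [haseg.1]
    have hzre : (γ.toFun a - 3).re = (γ.toFun a).re - 3 := by simp
    have : γ.toFun a - 3 = (((γ.toFun a).re - 3 : ℝ) : ℂ) := by
      apply Complex.ext <;> simp [haseg.1]
    rw [hf]
    simp only [this, Complex.norm_real, Real.norm_eq_abs]
    rw [abs_of_nonpos (by linarith [haseg.2.2])]
    linarith [haseg.2.1]
  have hfb : 3 ≤ f t₀ := by
    have h1 : |(γ.toFun t₀ - 3).re| ≤ ‖γ.toFun t₀ - 3‖ :=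
      Complex.abs_re_le_norm _
    have h2 : (γ.toFun t₀ - 3).re = -3 := by simp [hre₀]
    rw [hf]
    rw [h2] at h1
    simpa using h1
  obtain ⟨u, v, hu0, huv, hv1, hdiff, hband⟩ := exists_crossing haIcc ht₀ hfc hfa hfb
  set A : Set ℂ := Metric.closedBall (3:ℂ) 3 \ Metric.ball (3:ℂ) 2 with hA
  have hmemA : ∀ t ∈ Set.Ioo u v, γ.toFun t ∈ A := by
    intro t ht
    obtain ⟨hl, hr⟩ := hband t ht
    have hd : dist (γ.toFun t) 3 = f t := by rw [hf, Complex.dist_eq]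
    exact ⟨by rw [Metric.mem_closedBall, hd]; exact hr,
      by rw [Metric.mem_ball, hd]; exact not_lt.2 hl⟩
  -- reduce to the lintegral over `Ioo u v` of `‖deriv γ‖`
  have hsub : Set.Ioo u v ⊆ Set.Ioo (0:ℝ) 1 := Set.Ioo_subset_Ioo hu0 hv1
  have step1 : (∫⁻ t in Set.Ioo u v, ENNReal.ofReal ‖deriv γ.toFun t‖) ≤
      curveLIntegral (A.indicator fun _ => 1) γ := by
    rw [curveLIntegral]
    refine le_trans (le_of_eq ?_) (MeasureTheory.lintegral_mono_set hsub)
    refine (MeasureTheory.setLIntegral_congr_fun measurableSet_Ioo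
      (fun t ht => ?_)).symm
    rw [Set.indicator_of_mem (hmemA t ht), one_mul]
  refine le_trans ?_ step1
  -- main estimate: crossing an annulus of width 1 has length at least 1
  by_cases htop : (∫⁻ t in Set.Ioo u v, ENNReal.ofReal ‖deriv γ.toFun t‖) = ⊤
  · rw [htop]; exact le_top
  set φ : ℝ → ℝ := fun t => ‖deriv γ.toFun t‖ with hφ
  have hφmeas : Measurable φ := (measurable_deriv _).norm
  have hφnn : ∀ t, 0 ≤ φ t := fun t => norm_nonneg _
  have hφint : MeasureTheory.IntegrableOn φ (Set.Ioo u v) := by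
    refine ⟨hφmeas.aestronglyMeasurable.restrict, ?_⟩
    rw [MeasureTheory.hasFiniteIntegral_iff_ofReal
      (Filter.Eventually.of_forall hφnn)]
    exact lt_top_iff_ne_top.2 htop
  have hφIcc : MeasureTheory.IntegrableOn φ (Set.Icc u v) :=
    (integrableOn_Icc_iff_integrableOn_Ioo (by simp) (by simp)).2 hφint
  -- the unit covector in the direction of the displacement
  set D : ℂ := γ.toFun v - γ.toFun u with hD
  have hDnorm : 1 ≤ ‖D‖ := by
    have h1 : |f v - f u| ≤ ‖D‖ := by
      have := abs_norm_sub_norm_le (γ.toFun v - 3) (γ.toFun u - 3)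
      simpa [hf, hD,
        sub_sub_sub_cancel_right] using this
    linarith
  have hD0 : ‖D‖ ≠ 0 := by intro h; rw [h] at hDnorm; linarith
  set w : ℂ := (starRingEnd ℂ) D / (‖D‖ : ℂ) with hw
  have hwnorm : ‖w‖ = 1 := by
    rw [hw, norm_div, RCLike.norm_conj]
    simp only [Complex.norm_real, Real.norm_eq_abs, abs_norm]
    exact div_self hD0
  set g : ℝ → ℝ := fun t => (γ.toFun t * w).re with hg
  set g' : ℝ → ℝ := fun t => (deriv γ.toFun t * w).re with hg'
  have hgc : ContinuousOn g (Set.Icc u v) :=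
    Complex.continuous_re.comp_continuousOn
      (((γ.continuousOn.mono (Set.Icc_subset_Icc hu0 hv1))).mul continuousOn_const)
  have hder : ∀ x ∈ Set.Ioo u v \ (γ.exceptional : Set ℝ),
      HasDerivWithinAt g (g' x) (Set.Ioi x) x := by
    intro x hx
    have hx1 : x ∈ Set.Icc (0:ℝ) 1 \ (γ.exceptional : Set ℝ) :=
      ⟨⟨hu0.trans hx.1.1.le, hx.1.2.le.trans hv1⟩, hx.2⟩
    have h1 : HasDerivAt γ.toFun (deriv γ.toFun x) x :=
      (γ.differentiableAt x hx1).hasDerivAt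
    have h2 : HasDerivAt (fun t => γ.toFun t * w) (deriv γ.toFun x * w) x :=
      h1.mul_const w
    have h3 : HasDerivAt g (g' x) x :=
      Complex.reCLM.hasFDerivAt.comp_hasDerivAt x h2
    exact h3.hasDerivWithinAt
  have hbound : ∀ x ∈ Set.Ioo u v \ (γ.exceptional : Set ℝ), g' x ≤ φ x := by
    intro x _
    calc g' x ≤ ‖deriv γ.toFun x * w‖ := Complex.re_le_norm _
      _ = ‖deriv γ.toFun x‖ * ‖w‖ := by
          rw [norm_mul]
      _ = φ x := by rw [hwnorm, mul_one]
  have key := sub_le_integral_of_finite_exceptional γ.exceptional g g' φ u v huv.le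
    hgc hder hφIcc hbound
  have hgvu : g v - g u = ‖D‖ := by
    have h1 : g v - g u = (D * w).re := by
      rw [hg, hD]; simp [sub_mul, Complex.sub_re]
    have h2 : D * w = ((‖D‖ : ℝ) : ℂ) := by
      rw [hw, mul_div_assoc']
      rw [Complex.mul_conj]
      rw [Complex.normSq_eq_norm_sq]
      rw [show ((‖D‖ ^ 2 : ℝ) : ℂ) = ((‖D‖ : ℝ) : ℂ) * ((‖D‖ : ℝ) : ℂ) by push_cast; ring]
      rw [mul_div_assoc]
      rw [div_self (by simpa using hD0), mul_one]
    rw [h1, h2, Complex.ofReal_re]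
  have hone : (1:ℝ) ≤ ∫ y in u..v, φ y := by
    rw [← hgvu] at hDnorm
    linarith
  have hIoo : (∫ y in u..v, φ y) = ∫ y in Set.Ioo u v, φ y := by
    rw [intervalIntegral.integral_of_le huv.le,
      MeasureTheory.Measure.restrict_congr_set MeasureTheory.Ioo_ae_eq_Ioc.symm]
  have := MeasureTheory.ofReal_integral_eq_lintegral_ofReal hφint
    (Filter.Eventually.of_forall hφnn)
  calc (1:ENNReal) = ENNReal.ofReal 1 := by simp
    _ ≤ ENNReal.ofReal (∫ y in Set.Ioo u v, φ y) := by
        apply ENNReal.ofReal_le_ofReal; rw [← hIoo]; exact hone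
    _ = ∫⁻ t in Set.Ioo u v, ENNReal.ofReal (φ t) := this
    _ = ∫⁻ t in Set.Ioo u v, ENNReal.ofReal ‖deriv γ.toFun t‖ := rfl

/-- The family `Γ⁰` of curves in `C` connecting the vertical ray `{1 + iy : y ≥ 0}` to the
segment `[1,2]` which also intersect the imaginary axis `{Re z = 0}` has finite modulus. -/
theorem chimney_crossing_family_finite_modulus :
    modulus
      {γ ∈ connecting {z : ℂ | z.re = 1 ∧ 0 ≤ z.im} {z : ℂ | z.im = 0 ∧ 1 ≤ z.re ∧ z.re ≤ 2}
          chimney | ∃ t ∈ Set.Icc (0:ℝ) 1, (γ.toFun t).re = 0} < ⊤ := by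
  classical
  set A : Set ℂ := Metric.closedBall (3:ℂ) 3 \ Metric.ball (3:ℂ) 2 with hA
  have hAmeas : MeasurableSet A := measurableSet_closedBall.diff measurableSet_ball
  set ρ : ℂ → ENNReal := A.indicator (fun _ => 1) with hρ
  have hadm : IsAdmissible ρ
      {γ ∈ connecting {z : ℂ | z.re = 1 ∧ 0 ≤ z.im}
        {z : ℂ | z.im = 0 ∧ 1 ≤ z.re ∧ z.re ≤ 2} chimney |
          ∃ t ∈ Set.Icc (0:ℝ) 1, (γ.toFun t).re = 0} := by
    refine ⟨measurable_const.indicator hAmeas, ?_⟩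
    rintro γ ⟨hγ, hcross⟩
    exact annulus_admissible γ hγ hcross
  have hle : modulus
      {γ ∈ connecting {z : ℂ | z.re = 1 ∧ 0 ≤ z.im}
        {z : ℂ | z.im = 0 ∧ 1 ≤ z.re ∧ z.re ≤ 2} chimney |
          ∃ t ∈ Set.Icc (0:ℝ) 1, (γ.toFun t).re = 0} ≤ ∫⁻ z : ℂ, ρ z ^ 2 :=
    iInf₂_le ρ hadm
  refine lt_of_le_of_lt hle ?_
  have hsq : ∀ z, ρ z ^ 2 = A.indicator (fun _ => 1) z := by
    intro z
    by_cases h : z ∈ A <;> simp [hρ, h]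
  calc (∫⁻ z : ℂ, ρ z ^ 2) = ∫⁻ z : ℂ, A.indicator (fun _ => 1) z := by
        simp only [hsq]
    _ = MeasureTheory.volume A := by
        rw [MeasureTheory.lintegral_indicator hAmeas]
        simp
    _ ≤ MeasureTheory.volume (Metric.closedBall (3:ℂ) 3) :=
        MeasureTheory.measure_mono Set.diff_subset
    _ < ⊤ := MeasureTheory.measure_closedBall_lt_top

end
end
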